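/- arXiv:2405.06069 — 3 statements merged into one kernel-verified Lean document; each statement's English description precedes it below -/
import Mathlib

section
/- Theorem B(1): If an n-by-n real matrix A is TP_{k+2} for some k ≥ 1, then D_k(A) is TP_2. -/
open Matrix

open Matrix

/-- `A` is totally positive: every minor (with strictly increasing row and
column index selections) is positive. -/
def IsTP {α β : Type} [LinearOrder α] [LinearOrder β] (A : Matrix α β ℝ) : Prop :=
  ∀ (l : ℕ) (r : Fin l → α) (c : Fin l → β), StrictMono r → StrictMono c →
    0 < (A.submatrix r c).det

/-- `A` is `TP_k`: every minor of order at most `k` is positive. -/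
def IsTPk {α β : Type} [LinearOrder α] [LinearOrder β] (A : Matrix α β ℝ) (k : ℕ) : Prop :=
  ∀ (l : ℕ), l ≤ k → ∀ (r : Fin l → α) (c : Fin l → β), StrictMono r → StrictMono c →
    0 < (A.submatrix r c).det

/-- `k`-subsets of `{1,…,n}`, encoded as strictly increasing tuples. -/
abbrev STuple (n k : ℕ) : Type := {f : Fin k → Fin n // StrictMono f}

noncomputable instance lexPi {n k : ℕ} : LinearOrder (Lex (Fin k → Fin n)) :=
  @Pi.Lex.linearOrder (Fin k) (fun _ => Fin n) _
    Finite.to_wellFoundedLT _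

/-- The lexicographic linear order on `k`-subsets. -/
noncomputable instance {n k : ℕ} : LinearOrder (STuple n k) :=
  LinearOrder.lift' (fun s => toLex s.1) (fun _ _ h => Subtype.ext (congrArg ofLex h))

/-- The `k`-th compound matrix of `A`: the matrix of all `k×k` minors of `A`,
rows and columns indexed by `k`-subsets ordered lexicographically. -/
noncomputable def compound {n : ℕ} (A : Matrix (Fin n) (Fin n) ℝ) (k : ℕ) :
    Matrix (STuple n k) (STuple n k) ℝ :=
  fun s t => (A.submatrix s.1 t.1).det

/-- The `k`-th Dodgson condensation matrix of `A`: the `(n-k) × (n-k)` matrix of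
contiguous minors of order `k+1` (0-indexed positions). -/
noncomputable def Dmat {n : ℕ} (A : Matrix (Fin n) (Fin n) ℝ) (k : ℕ) :
    Matrix (Fin (n - k)) (Fin (n - k)) ℝ :=
  fun i j =>
    (A.submatrix
      (fun p : Fin (k + 1) => (⟨i.1 + p.1, by have := i.2; have := p.2; omega⟩ : Fin n))
      (fun p : Fin (k + 1) => (⟨j.1 + p.1, by have := j.2; have := p.2; omega⟩ : Fin n))).det

/-- The contiguous minor of `A` of order `sz` with top-left position `(i, j)`
(0-indexed): `det A[{i,…,i+sz-1},{j,…,j+sz-1}]`. -/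
noncomputable def cminor {n : ℕ} (A : Matrix (Fin n) (Fin n) ℝ) (sz i j : ℕ)
    (hi : i + sz ≤ n) (hj : j + sz ≤ n) : ℝ :=
  (A.submatrix (fun p : Fin sz => (⟨i + p.1, by have := p.2; omega⟩ : Fin n))
               (fun p : Fin sz => (⟨j + p.1, by have := p.2; omega⟩ : Fin n))).det


private lemma det_updateColumn_single {m : ℕ} (A : Matrix (Fin (m+1)) (Fin (m+1)) ℝ)
    (i0 j : Fin (m+1)) :
    (A.updateCol j (Pi.single i0 1)).det
      = (-1)^((i0 : ℕ) + (j : ℕ)) * (A.submatrix i0.succAbove j.succAbove).det := by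
  rw [det_succ_column _ j, Finset.sum_eq_single i0]
  · have h1 : (A.updateCol j (Pi.single i0 1)) i0 j = 1 := by simp
    have h2 : (A.updateCol j (Pi.single i0 1)).submatrix i0.succAbove j.succAbove
        = A.submatrix i0.succAbove j.succAbove := by
      ext p q
      simp [Matrix.updateCol_apply, Fin.succAbove_ne j q]
    rw [h1, h2, mul_one]
  · intro b _ hb
    have : (A.updateCol j (Pi.single i0 1)) b j = 0 := by
      simp [Pi.single_eq_of_ne hb]
    rw [this]; ring
  · intro h; exact absurd (Finset.mem_univ i0) h

/-- The reindexing sending `inl 0 ↦ 0`, `inl 1 ↦ last`, `inr q ↦ q+1`. -/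
private def cornerEquiv (s : ℕ) : Fin 2 ⊕ Fin s ≃ Fin (s+2) where
  toFun a := match a with
    | Sum.inl i => if i = 0 then 0 else Fin.last (s+1)
    | Sum.inr q => q.succ.castSucc
  invFun p := if h : (p : ℕ) = 0 then Sum.inl 0
    else if h2 : (p : ℕ) = s+1 then Sum.inl 1
    else Sum.inr ⟨(p : ℕ) - 1, by have := p.2; omega⟩
  left_inv a := by
    rcases a with i | q
    · fin_cases i <;> simp
    · have hq := q.2
      have h1 : ((q.succ.castSucc : Fin (s+2)) : ℕ) = q.1 + 1 := by simp
      dsimp only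
      rw [dif_neg (by rw [h1]; omega), dif_neg (by rw [h1]; omega)]
      congr 1
  right_inv p := by
    dsimp only
    by_cases h0 : (p : ℕ) = 0
    · rw [dif_pos h0]
      simp
      exact Fin.ext (by simp [h0])
    · rw [dif_neg h0]
      by_cases hL : (p : ℕ) = s+1
      · rw [dif_pos hL]
        simp
        exact Fin.ext (by simp [hL])
      · rw [dif_neg hL]
        have := p.2
        exact Fin.ext (by simp; omega)

@[simp] private lemma cornerEquiv_inl0 (s : ℕ) : cornerEquiv s (Sum.inl 0) = 0 := rfl

@[simp] private lemma cornerEquiv_inl1 (s : ℕ) : cornerEquiv s (Sum.inl 1) = Fin.last (s+1) := rfl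

@[simp] private lemma cornerEquiv_inr (s : ℕ) (q : Fin s) :
    cornerEquiv s (Sum.inr q) = q.succ.castSucc := rfl

private lemma desnanot_jacobi {s : ℕ} (M : Matrix (Fin (s+2)) (Fin (s+2)) ℝ)
    (hd : M.det ≠ 0) :
    (M.submatrix Fin.succ Fin.succ).det * (M.submatrix Fin.castSucc Fin.castSucc).det
      - (M.submatrix Fin.castSucc Fin.succ).det * (M.submatrix Fin.succ Fin.castSucc).det
    = M.det * (M.submatrix (fun p : Fin s => p.succ.castSucc)
        (fun p : Fin s => p.succ.castSucc)).det := by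
  set d := M.det with hdd
  set x : Fin (s+2) → ℝ := cramer M (Pi.single 0 1) with hx
  set y : Fin (s+2) → ℝ := cramer M (Pi.single (Fin.last (s+1)) 1) with hy
  set C : Matrix (Fin (s+2)) (Fin (s+2)) ℝ :=
    Matrix.of (fun p q => if q = 0 then x p else if q = Fin.last (s+1) then y p
      else if p = q then (1:ℝ) else 0) with hC
  have e0L : (0 : Fin (s+2)) ≠ Fin.last (s+1) := by
    simp [Fin.ext_iff]
  have hmid0 : ∀ q : Fin s, (q.succ.castSucc : Fin (s+2)) ≠ 0 := by
    intro q; simp [Fin.ext_iff]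
  have hmidL : ∀ q : Fin s, (q.succ.castSucc : Fin (s+2)) ≠ Fin.last (s+1) := by
    intro q; have := q.2; simp [Fin.ext_iff]; omega
  set e := cornerEquiv s with he
  -- determinant of C via blocks
  have hCblock : C.submatrix e e = Matrix.fromBlocks
      !![x 0, y 0; x (Fin.last (s+1)), y (Fin.last (s+1))] 0
      (Matrix.of fun (p : Fin s) (j : Fin 2) =>
        if j = 0 then x p.succ.castSucc else y p.succ.castSucc)
      (1 : Matrix (Fin s) (Fin s) ℝ) := by
    ext (i | p) (j | q)
    · fin_cases i <;> fin_cases j <;>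
        simp [hC, he, e0L, Ne.symm e0L]
    · fin_cases i <;>
        simp [hC, he, hmid0 q, hmidL q, Ne.symm (hmid0 q), Ne.symm (hmidL q), e0L,
          (by have := q.2; simp [Fin.ext_iff]; omega : Fin.last (s+1) ≠ q.castSucc.succ),
          (Fin.succ_ne_zero q.castSucc).symm]
    · fin_cases j <;> simp [hC, he, hmid0 p, hmidL p]
    · by_cases hpq : p = q
      · simp [hC, he, hpq, hmid0 q, hmidL q, Matrix.one_apply]
      · have hne : (p.succ.castSucc : Fin (s+2)) ≠ q.succ.castSucc := by
          simp [Fin.ext_iff]; omega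
        simp [hC, he, hmid0 q, hmidL q, hne, Matrix.one_apply, hpq]
  have hCdet : C.det = x 0 * y (Fin.last (s+1)) - y 0 * x (Fin.last (s+1)) := by
    rw [← det_submatrix_equiv_self e, hCblock, det_fromBlocks_zero₁₂, det_one, mul_one,
      det_fin_two]
    simp
  -- M * C via blocks
  have hMC0 : ∀ p, (M * C) p 0 = d * (Pi.single 0 1 : Fin (s+2) → ℝ) p := by
    intro p
    have h1 : (M * C) p 0 = (M *ᵥ x) p := by
      simp [Matrix.mul_apply, Matrix.mulVec, dotProduct, hC]
    rw [h1, hx, mulVec_cramer]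
    simp [hdd]
  have hMCL : ∀ p, (M * C) p (Fin.last (s+1)) = d * (Pi.single (Fin.last (s+1)) 1 : Fin (s+2) → ℝ) p := by
    intro p
    have h1 : (M * C) p (Fin.last (s+1)) = (M *ᵥ y) p := by
      simp [Matrix.mul_apply, Matrix.mulVec, dotProduct, hC, Ne.symm e0L]
    rw [h1, hy, mulVec_cramer]
    simp [hdd]
  have hMCmid : ∀ p (q : Fin s), (M * C) p q.succ.castSucc = M p q.succ.castSucc := by
    intro p q
    simp [Matrix.mul_apply, hC, hmid0 q, hmidL q, mul_ite, Finset.sum_ite_eq']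
  have hMCblock : (M * C).submatrix e e = Matrix.fromBlocks
      (d • (1 : Matrix (Fin 2) (Fin 2) ℝ))
      (Matrix.of fun (i : Fin 2) (q : Fin s) => (M * C) (e (Sum.inl i)) q.succ.castSucc)
      0 (M.submatrix (fun p : Fin s => p.succ.castSucc) (fun p : Fin s => p.succ.castSucc)) := by
    ext (i | p) (j | q)
    · fin_cases i <;> fin_cases j <;>
        simp [he, hMC0, hMCL, Matrix.one_apply, e0L, Ne.symm e0L, Pi.single_apply]
    · fin_cases i <;> simp [he]
    · fin_cases j <;>
        simp [he, hMC0, hMCL, Pi.single_apply, hmid0 p, hmidL p]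
    · simp [he]
      exact hMCmid _ q
  have hMCdet : (M * C).det = d * d *
      (M.submatrix (fun p : Fin s => p.succ.castSucc) (fun p : Fin s => p.succ.castSucc)).det := by
    rw [← det_submatrix_equiv_self e, hMCblock, det_fromBlocks_zero₂₁, det_smul, det_one]
    simp only [Fintype.card_fin, mul_one]
    ring
  have hCd : C.det = d *
      (M.submatrix (fun p : Fin s => p.succ.castSucc) (fun p : Fin s => p.succ.castSucc)).det := by
    have h2 : (M * C).det = d * C.det := by rw [Matrix.det_mul, ← hdd]
    apply mul_left_cancel₀ hd
    rw [← h2, hMCdet]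
    ring
  -- corner entries
  have hx0 : x 0 = (M.submatrix Fin.succ Fin.succ).det := by
    rw [hx, cramer_apply, det_updateColumn_single]
    simp
  have hxL : x (Fin.last (s+1)) = (-1 : ℝ)^(s+1) * (M.submatrix Fin.succ Fin.castSucc).det := by
    rw [hx, cramer_apply, det_updateColumn_single]
    simp
  have hy0 : y 0 = (-1 : ℝ)^(s+1) * (M.submatrix Fin.castSucc Fin.succ).det := by
    rw [hy, cramer_apply, det_updateColumn_single]
    simp
  have hyL : y (Fin.last (s+1)) = (M.submatrix Fin.castSucc Fin.castSucc).det := by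
    rw [hy, cramer_apply, det_updateColumn_single]
    simp [Even.neg_one_pow (⟨s+1, rfl⟩ : Even ((s+1)+(s+1)))]
  have hsign : ((-1 : ℝ))^(s+1) * (-1 : ℝ)^(s+1) = 1 := by
    rw [← pow_add]
    exact Even.neg_one_pow ⟨s+1, rfl⟩
  rw [hx0, hxL, hy0, hyL] at hCdet
  linear_combination hCd - hCdet +
    (M.submatrix Fin.castSucc Fin.succ).det * (M.submatrix Fin.succ Fin.castSucc).det * hsign

private lemma ratio_lt {N : ℕ} (f g : Fin N → ℝ) (hf : ∀ j, 0 < f j) (hg : ∀ j, 0 < g j)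
    (hadj : ∀ (j : ℕ) (h : j + 1 < N),
      f ⟨j, by omega⟩ * g ⟨j+1, h⟩ < g ⟨j, by omega⟩ * f ⟨j+1, h⟩) :
    ∀ (j j' : Fin N), j < j' → f j * g j' < g j * f j' := by
  have key : ∀ (d : ℕ), 1 ≤ d → ∀ (j : ℕ) (h : j + d < N),
      f ⟨j, by omega⟩ / g ⟨j, by omega⟩ < f ⟨j+d, h⟩ / g ⟨j+d, h⟩ := by
    intro d hd
    induction d, hd using Nat.le_induction with
    | base =>
      intro j h
      refine (div_lt_div_iff₀ (hg _) (hg _)).2 ?_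
      rw [mul_comm (f ⟨j+1, h⟩)]
      exact hadj j h
    | succ d hd ih =>
      intro j h
      have h1 : j + d < N := by omega
      calc f ⟨j, by omega⟩ / g ⟨j, by omega⟩
          < f ⟨j+d, h1⟩ / g ⟨j+d, h1⟩ := ih j h1
        _ < f ⟨j+(d+1), h⟩ / g ⟨j+(d+1), h⟩ := by
            have h2 := hadj (j+d) (by omega)
            have h3 : (⟨j+d+1, by omega⟩ : Fin N) = ⟨j+(d+1), h⟩ := rfl
            rw [h3] at h2
            refine (div_lt_div_iff₀ (hg _) (hg _)).2 ?_
            rw [mul_comm (f ⟨j+(d+1), h⟩)]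
            exact h2
  intro j j' hjj'
  have hlt : j.1 < j'.1 := hjj'
  have h1 : j.1 + (j'.1 - j.1) < N := by have := j'.2; omega
  have hk := key (j'.1 - j.1) (by omega) j.1 h1
  have e1 : (⟨j.1, by omega⟩ : Fin N) = j := Fin.ext rfl
  have e2 : (⟨j.1 + (j'.1 - j.1), h1⟩ : Fin N) = j' := Fin.ext (show j.1 + (j'.1 - j.1) = j'.1 by omega)
  rw [e1, e2] at hk
  have := (div_lt_div_iff₀ (hg j) (hg j')).1 hk
  linarith [this, mul_comm (f j') (g j)]

private lemma tp2_of_adjacent {N : ℕ} (P : Matrix (Fin N) (Fin N) ℝ)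
    (hpos : ∀ i j, 0 < P i j)
    (hadj : ∀ (i j : ℕ) (hi : i + 1 < N) (hj : j + 1 < N),
      P ⟨i, by omega⟩ ⟨j+1, hj⟩ * P ⟨i+1, hi⟩ ⟨j, by omega⟩
        < P ⟨i, by omega⟩ ⟨j, by omega⟩ * P ⟨i+1, hi⟩ ⟨j+1, hj⟩)
    {i i' j j' : Fin N} (hii : i < i') (hjj : j < j') :
    P i j' * P i' j < P i j * P i' j' := by
  have step1 : ∀ (a : ℕ) (ha : a + 1 < N) (b b' : Fin N), b < b' →
      P ⟨a+1, ha⟩ b * P ⟨a, by omega⟩ b' < P ⟨a, by omega⟩ b * P ⟨a+1, ha⟩ b' := by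
    intro a ha
    refine ratio_lt (fun t => P ⟨a+1, ha⟩ t) (fun t => P ⟨a, by omega⟩ t)
      (fun t => hpos _ _) (fun t => hpos _ _) ?_
    intro b hb
    rw [mul_comm]
    exact hadj a b ha hb
  have step2 := ratio_lt (fun t : Fin N => P t j') (fun t => P t j)
    (fun t => hpos _ _) (fun t => hpos _ _) ?_ i i' hii
  · exact step2
  · intro a ha
    rw [mul_comm]
    exact step1 a ha j j' hjj

private lemma Dmat_pos {n k : ℕ} (A : Matrix (Fin n) (Fin n) ℝ) (hA : IsTPk A (k+2))
    (i j : Fin (n-k)) : 0 < Dmat A k i j := by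
  simp only [Dmat]
  apply hA (k+1) (by omega)
  · intro p q h
    simp only [Fin.lt_def] at h ⊢
    omega
  · intro p q h
    simp only [Fin.lt_def] at h ⊢
    omega

private lemma Dmat_adj {n k : ℕ} (A : Matrix (Fin n) (Fin n) ℝ) (hA : IsTPk A (k+2))
    (i j : ℕ) (hi : i + 1 < n - k) (hj : j + 1 < n - k) :
    Dmat A k ⟨i, by omega⟩ ⟨j+1, hj⟩ * Dmat A k ⟨i+1, hi⟩ ⟨j, by omega⟩
      < Dmat A k ⟨i, by omega⟩ ⟨j, by omega⟩ * Dmat A k ⟨i+1, hi⟩ ⟨j+1, hj⟩ := by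
  have hin : i + (k+2) ≤ n := by omega
  have hjn : j + (k+2) ≤ n := by omega
  have smono : ∀ (a l : ℕ) (h : a + l ≤ n),
      StrictMono (fun p : Fin l => (⟨a + p.1, by have := p.2; omega⟩ : Fin n)) := by
    intro a l h p q hpq
    simp only [Fin.lt_def] at hpq ⊢
    omega
  set M : Matrix (Fin (k+2)) (Fin (k+2)) ℝ :=
    A.submatrix (fun p : Fin (k+2) => (⟨i + p.1, by have := p.2; omega⟩ : Fin n))
                (fun p : Fin (k+2) => (⟨j + p.1, by have := p.2; omega⟩ : Fin n)) with hM
  have hdM : 0 < M.det := hA (k+2) le_rfl _ _ (smono i (k+2) hin) (smono j (k+2) hjn)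
  have hintpos : 0 < (M.submatrix (fun p : Fin k => p.succ.castSucc)
      (fun p : Fin k => p.succ.castSucc)).det := by
    have h2 : M.submatrix (fun p : Fin k => p.succ.castSucc) (fun p : Fin k => p.succ.castSucc)
        = A.submatrix (fun p : Fin k => (⟨(i+1) + p.1, by have := p.2; omega⟩ : Fin n))
                      (fun p : Fin k => (⟨(j+1) + p.1, by have := p.2; omega⟩ : Fin n)) := by
      rw [hM, Matrix.submatrix_submatrix]
      ext p q
      simp only [Matrix.submatrix_apply, Function.comp_apply]
      first
        | rfl
        | (congr 1 <;>
            first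
              | (apply Fin.ext; simp; done)
              | (apply Fin.ext; simp; omega))
    rw [h2]
    exact hA k (by omega) _ _ (smono (i+1) k (by omega)) (smono (j+1) k (by omega))
  have c00 : Dmat A k ⟨i, by omega⟩ ⟨j, by omega⟩
      = (M.submatrix Fin.castSucc Fin.castSucc).det := by
    rw [hM, Matrix.submatrix_submatrix]
    simp only [Dmat]
    refine congrArg Matrix.det ?_
    ext p q
    simp only [Matrix.submatrix_apply, Function.comp_apply]
    first
      | rfl
      | (congr 1 <;>
          first
            | (apply Fin.ext; simp; done)
            | (apply Fin.ext; simp; omega))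
  have c01 : Dmat A k ⟨i, by omega⟩ ⟨j+1, hj⟩
      = (M.submatrix Fin.castSucc Fin.succ).det := by
    rw [hM, Matrix.submatrix_submatrix]
    simp only [Dmat]
    refine congrArg Matrix.det ?_
    ext p q
    simp only [Matrix.submatrix_apply, Function.comp_apply]
    first
      | rfl
      | (congr 1 <;>
          first
            | (apply Fin.ext; simp; done)
            | (apply Fin.ext; simp; omega))
  have c10 : Dmat A k ⟨i+1, hi⟩ ⟨j, by omega⟩
      = (M.submatrix Fin.succ Fin.castSucc).det := by
    rw [hM, Matrix.submatrix_submatrix]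
    simp only [Dmat]
    refine congrArg Matrix.det ?_
    ext p q
    simp only [Matrix.submatrix_apply, Function.comp_apply]
    first
      | rfl
      | (congr 1 <;>
          first
            | (apply Fin.ext; simp; done)
            | (apply Fin.ext; simp; omega))
  have c11 : Dmat A k ⟨i+1, hi⟩ ⟨j+1, hj⟩
      = (M.submatrix Fin.succ Fin.succ).det := by
    rw [hM, Matrix.submatrix_submatrix]
    simp only [Dmat]
    refine congrArg Matrix.det ?_
    ext p q
    simp only [Matrix.submatrix_apply, Function.comp_apply]
    first
      | rfl
      | (congr 1 <;>
          first
            | (apply Fin.ext; simp; done)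
            | (apply Fin.ext; simp; omega))
  have hDJ := desnanot_jacobi M (ne_of_gt hdM)
  rw [c00, c01, c10, c11]
  have hprod := mul_pos hdM hintpos
  linarith [hDJ, hprod,
    mul_comm (M.submatrix Fin.castSucc Fin.castSucc).det (M.submatrix Fin.succ Fin.succ).det]

/-- **Theorem B(1).** If `A` is `TP_{k+2}` for some `k ≥ 1`, then `D_k(A)` is `TP₂`. -/
theorem Dmat_TP2 {n k : ℕ} (hk : 1 ≤ k) (A : Matrix (Fin n) (Fin n) ℝ)
    (hA : IsTPk A (k + 2)) : IsTPk (Dmat A k) 2 := by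
  intro l hl r c hr hc
  interval_cases l
  · norm_num [Matrix.det_fin_zero]
  · rw [Matrix.det_fin_one]
    exact Dmat_pos A hA (r 0) (c 0)
  · rw [Matrix.det_fin_two]
    simp only [Matrix.submatrix_apply]
    have h01 : (0 : Fin 2) < 1 := by norm_num
    have hkey := tp2_of_adjacent (Dmat A k) (Dmat_pos A hA)
      (fun a b ha hb => Dmat_adj A hA a b ha hb) (hr h01) (hc h01)
    linarith
end

section
/- Theorem B(2): If an n-by-n real matrix A is TP_{k+3} for some k ≥ 1, then D_k(A) is TP_3. -/
open Matrix

open Matrix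

open Matrix

section DJaux

variable {m : ℕ}

private def inn (m : ℕ) : Fin m → Fin (m+2) := fun p => ⟨p.1 + 1, by omega⟩
private def bnd (m : ℕ) : Fin 2 → Fin (m+2) := ![⟨0, by omega⟩, ⟨m+1, by omega⟩]
private def u0 (m : ℕ) : Sum (Fin 1) (Fin m) → Fin (m+1) :=
  Sum.elim (fun _ => ⟨0, by omega⟩) (fun p => ⟨p.1 + 1, by omega⟩)
private def u1 (m : ℕ) : Sum (Fin 1) (Fin m) → Fin (m+1) :=
  Sum.elim (fun _ => ⟨m, by omega⟩) (fun p => ⟨p.1, by omega⟩)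

private lemma bij2 : Function.Bijective (Sum.elim (bnd m) (inn m)) := by
  constructor
  · rintro (a|a) (b|b) h
    · fin_cases a <;> fin_cases b <;> simp_all [bnd, Fin.ext_iff]
    · exfalso; have := b.2; fin_cases a <;> simp [bnd, inn, Fin.ext_iff] at h <;> omega
    · exfalso; have := a.2; fin_cases b <;> simp [bnd, inn, Fin.ext_iff] at h <;> omega
    · simp only [Sum.elim_inr, inn, Fin.mk.injEq] at h
      exact congrArg Sum.inr (Fin.ext (by omega))
  · intro q
    rcases Nat.lt_trichotomy q.1 (m+1) with h | h | h
    · rcases Nat.eq_zero_or_pos q.1 with h0 | h0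
      · exact ⟨Sum.inl 0, Fin.ext (by simp [bnd]; omega)⟩
      · exact ⟨Sum.inr ⟨q.1 - 1, by omega⟩, Fin.ext (by simp [inn]; omega)⟩
    · exact ⟨Sum.inl 1, Fin.ext (by simp [bnd]; omega)⟩
    · exact absurd q.2 (by omega)

private lemma bij0 : Function.Bijective (u0 m) := by
  constructor
  · rintro (a|a) (b|b) h <;> simp only [u0, Sum.elim_inl, Sum.elim_inr, Fin.mk.injEq] at h
    · exact congrArg Sum.inl (Subsingleton.elim a b)
    · omega
    · omega
    · exact congrArg Sum.inr (Fin.ext (by omega))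
  · intro q
    rcases Nat.eq_zero_or_pos q.1 with h0 | h0
    · exact ⟨Sum.inl 0, Fin.ext (by simp [u0]; omega)⟩
    · exact ⟨Sum.inr ⟨q.1 - 1, by have := q.2; omega⟩, Fin.ext (by simp [u0]; omega)⟩

private lemma bij1 : Function.Bijective (u1 m) := by
  constructor
  · rintro (a|a) (b|b) h <;> simp only [u1, Sum.elim_inl, Sum.elim_inr, Fin.mk.injEq] at h
    · exact congrArg Sum.inl (Subsingleton.elim a b)
    · exact absurd h (by have := b.2; omega)
    · exact absurd h (by have := a.2; omega)
    · exact congrArg Sum.inr (Fin.ext (by omega))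
  · intro q
    rcases Nat.lt_or_ge q.1 m with h0 | h0
    · exact ⟨Sum.inr ⟨q.1, h0⟩, rfl⟩
    · exact ⟨Sum.inl 0, Fin.ext (by simp [u1]; have := q.2; omega)⟩

private lemma det_sub_two {τ : Type} [Fintype τ] [DecidableEq τ]
    (B C : Matrix (Fin (m+1)) (Fin (m+1)) ℝ) (e e' : τ ≃ Fin (m+1)) :
    det (B.submatrix e e') * det (C.submatrix e' e) = det B * det C := by
  have key : ∀ (M : Matrix (Fin (m+1)) (Fin (m+1)) ℝ) (f g : τ ≃ Fin (m+1)),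
      det (M.submatrix f g) = (Equiv.Perm.sign (g.symm.trans f : Equiv.Perm _) : ℤ) * det M := by
    intro M f g
    have h1 : M.submatrix f g = (M.submatrix (f ∘ g.symm) id).submatrix g g := by
      ext i j; simp [submatrix_apply]
    have h2 : (⇑f ∘ ⇑g.symm) = ⇑(g.symm.trans f : Equiv.Perm _) := rfl
    rw [h1, det_submatrix_equiv_self g, h2, det_permute]
  rw [key B e e', key C e' e]
  have hsymm : (e.symm.trans e') = (e'.symm.trans e).symm := by
    ext x; simp
  rw [hsymm, Equiv.Perm.sign_symm]
  have h3 := Int.units_mul_self (Equiv.Perm.sign (e'.symm.trans e : Equiv.Perm _))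
  set s := ((Equiv.Perm.sign (e'.symm.trans e : Equiv.Perm _) : ℤ) : ℝ)
  have hs : s * s = 1 := by
    simp only [s, ← Int.cast_mul, ← Units.val_mul, h3, Units.val_one, Int.cast_one]
  linear_combination B.det * C.det * hs

private noncomputable def e2 (m : ℕ) : (Sum (Fin 2) (Fin m)) ≃ Fin (m+2) :=
  Equiv.ofBijective _ bij2
private noncomputable def e0 (m : ℕ) : (Sum (Fin 1) (Fin m)) ≃ Fin (m+1) :=
  Equiv.ofBijective _ bij0
private noncomputable def e1 (m : ℕ) : (Sum (Fin 1) (Fin m)) ≃ Fin (m+1) :=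
  Equiv.ofBijective _ bij1

set_option maxHeartbeats 1000000 in
/-- The Desnanot–Jacobi identity, assuming the interior minor is nonzero. -/
private lemma DJ (X : Matrix (Fin (m+2)) (Fin (m+2)) ℝ)
    (hS : det (X.submatrix (inn m) (inn m)) ≠ 0) :
    det X * det (X.submatrix (inn m) (inn m)) =
      det (X.submatrix Fin.castSucc Fin.castSucc) * det (X.submatrix Fin.succ Fin.succ)
      - det (X.submatrix Fin.castSucc Fin.succ) * det (X.submatrix Fin.succ Fin.castSucc) := by
  set S := X.submatrix (inn m) (inn m) with hSdef
  haveI : Invertible S := S.invertibleOfIsUnitDet (isUnit_iff_ne_zero.mpr hS)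
  set P : Matrix (Fin 2) (Fin 2) ℝ := fun a b => X (bnd m a) (bnd m b) with hP
  set Q : Matrix (Fin 2) (Fin m) ℝ := fun a p => X (bnd m a) (inn m p) with hQ
  set R : Matrix (Fin m) (Fin 2) ℝ := fun p b => X (inn m p) (bnd m b) with hR
  set T : Matrix (Fin 2) (Fin 2) ℝ := P - Q * ⅟S * R with hT
  have hfull : det X = det S * det T := by
    have h1 : X.submatrix (Sum.elim (bnd m) (inn m)) (Sum.elim (bnd m) (inn m))
        = fromBlocks P Q R S := by
      ext (i|i) (j|j) <;> rfl
    have h2 : det X = det (X.submatrix (e2 m) (e2 m)) := (det_submatrix_equiv_self (e2 m) X).symm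
    have he2 : ⇑(e2 m) = Sum.elim (bnd m) (inn m) := rfl
    rw [h2, he2, h1, det_fromBlocks₂₂]
  have hZ : ∀ a b : Fin 2,
      det (X.submatrix (Sum.elim (fun _ : Fin 1 => bnd m a) (inn m))
            (Sum.elim (fun _ : Fin 1 => bnd m b) (inn m))) = det S * T a b := by
    intro a b
    have h1 : X.submatrix (Sum.elim (fun _ : Fin 1 => bnd m a) (inn m))
            (Sum.elim (fun _ : Fin 1 => bnd m b) (inn m)) =
        fromBlocks (fun _ _ => P a b) (fun _ p => Q a p) (fun p _ => R p b) S := by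
      ext (i|i) (j|j) <;> rfl
    rw [h1]; refine (det_fromBlocks₂₂ _ _ _ S).trans ?_
    congr 1
    rw [det_fin_one]
    simp [hT, Matrix.sub_apply, Matrix.mul_apply]
    rfl
  have hu0cast : Fin.castSucc ∘ (u0 m) = Sum.elim (fun _ : Fin 1 => bnd m 0) (inn m) := by
    funext x; cases x <;> exact Fin.ext (by simp [u0, inn, bnd])
  have hu1succ : Fin.succ ∘ (u1 m) = Sum.elim (fun _ : Fin 1 => bnd m 1) (inn m) := by
    funext x; cases x <;> exact Fin.ext (by simp [u1, inn, bnd])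
  have h00 : det (X.submatrix Fin.castSucc Fin.castSucc) = det S * T 0 0 := by
    rw [← hZ 0 0, ← det_submatrix_equiv_self (e0 m) (X.submatrix Fin.castSucc Fin.castSucc)]
    congr 1 <;> rw [show ⇑(e0 m) = u0 m from rfl]
    rw [submatrix_submatrix, hu0cast]
  have h11 : det (X.submatrix Fin.succ Fin.succ) = det S * T 1 1 := by
    rw [← hZ 1 1, ← det_submatrix_equiv_self (e1 m) (X.submatrix Fin.succ Fin.succ)]
    congr 1 <;> rw [show ⇑(e1 m) = u1 m from rfl]
    rw [submatrix_submatrix, hu1succ]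
  have hx : det (X.submatrix Fin.castSucc Fin.succ) * det (X.submatrix Fin.succ Fin.castSucc)
      = (det S * T 0 1) * (det S * T 1 0) := by
    rw [← hZ 0 1, ← hZ 1 0]
    have c1 : X.submatrix (Sum.elim (fun _ : Fin 1 => bnd m 0) (inn m))
        (Sum.elim (fun _ : Fin 1 => bnd m 1) (inn m))
        = (X.submatrix Fin.castSucc Fin.succ).submatrix (e0 m) (e1 m) := by
      rw [show ⇑(e0 m) = u0 m from rfl, show ⇑(e1 m) = u1 m from rfl,
        submatrix_submatrix, hu0cast, hu1succ]
    have c2 : X.submatrix (Sum.elim (fun _ : Fin 1 => bnd m 1) (inn m))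
        (Sum.elim (fun _ : Fin 1 => bnd m 0) (inn m))
        = (X.submatrix Fin.succ Fin.castSucc).submatrix (e1 m) (e0 m) := by
      rw [show ⇑(e0 m) = u0 m from rfl, show ⇑(e1 m) = u1 m from rfl,
        submatrix_submatrix, hu0cast, hu1succ]
    rw [c1, c2]
    exact (det_sub_two _ _ (e0 m) (e1 m)).symm
  rw [hfull, h00, h11, hx, det_fin_two T]
  ring

end DJaux

section CM

variable {n k : ℕ}

/-- total version of `cminor` -/
private noncomputable def cm (A : Matrix (Fin n) (Fin n) ℝ) (s a b : ℕ) : ℝ :=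
  if h : a + s ≤ n ∧ b + s ≤ n then cminor A s a b h.1 h.2 else 0

private lemma cm_eq_det (A : Matrix (Fin n) (Fin n) ℝ) (s a b : ℕ)
    (ha : a + s ≤ n) (hb : b + s ≤ n) :
    cm A s a b = det (A.submatrix
      (fun p : Fin s => (⟨a + p.1, by have := p.2; omega⟩ : Fin n))
      (fun p : Fin s => (⟨b + p.1, by have := p.2; omega⟩ : Fin n))) := by
  rw [cm, dif_pos ⟨ha, hb⟩]; rfl

private lemma cm_pos {A : Matrix (Fin n) (Fin n) ℝ} (hA : IsTPk A (k + 3))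
    {s a b : ℕ} (hs : s ≤ k + 3) (ha : a + s ≤ n) (hb : b + s ≤ n) :
    0 < cm A s a b := by
  rw [cm_eq_det A s a b ha hb]
  refine hA s hs _ _ ?_ ?_ <;>
    exact fun p q hpq => by simp only [Fin.lt_def] at hpq ⊢; omega

private lemma cm_DJ (A : Matrix (Fin n) (Fin n) ℝ) (s a b : ℕ)
    (ha : a + (s + 2) ≤ n) (hb : b + (s + 2) ≤ n)
    (h0 : cm A s (a+1) (b+1) ≠ 0) :
    cm A (s+2) a b * cm A s (a+1) (b+1) =
      cm A (s+1) a b * cm A (s+1) (a+1) (b+1)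
      - cm A (s+1) a (b+1) * cm A (s+1) (a+1) b := by
  set X : Matrix (Fin (s+2)) (Fin (s+2)) ℝ := A.submatrix
      (fun p : Fin (s+2) => (⟨a + p.1, by have := p.2; omega⟩ : Fin n))
      (fun p : Fin (s+2) => (⟨b + p.1, by have := p.2; omega⟩ : Fin n)) with hX
  have hinn : X.submatrix (inn s) (inn s) = A.submatrix
      (fun p : Fin s => (⟨(a+1) + p.1, by have := p.2; omega⟩ : Fin n))
      (fun p : Fin s => (⟨(b+1) + p.1, by have := p.2; omega⟩ : Fin n)) := by
    ext p q
    simp only [hX, submatrix_apply, inn]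
    congr 1 <;> exact Fin.ext (by simp; omega)
  have hcc : X.submatrix Fin.castSucc Fin.castSucc = A.submatrix
      (fun p : Fin (s+1) => (⟨a + p.1, by have := p.2; omega⟩ : Fin n))
      (fun p : Fin (s+1) => (⟨b + p.1, by have := p.2; omega⟩ : Fin n)) := by
    ext p q
    simp only [hX, submatrix_apply]
    congr 1 <;> exact Fin.ext (by simp)
  have hss : X.submatrix Fin.succ Fin.succ = A.submatrix
      (fun p : Fin (s+1) => (⟨(a+1) + p.1, by have := p.2; omega⟩ : Fin n))
      (fun p : Fin (s+1) => (⟨(b+1) + p.1, by have := p.2; omega⟩ : Fin n)) := by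
    ext p q
    simp only [hX, submatrix_apply]
    congr 1 <;> exact Fin.ext (by simp; omega)
  have hcs : X.submatrix Fin.castSucc Fin.succ = A.submatrix
      (fun p : Fin (s+1) => (⟨a + p.1, by have := p.2; omega⟩ : Fin n))
      (fun p : Fin (s+1) => (⟨(b+1) + p.1, by have := p.2; omega⟩ : Fin n)) := by
    ext p q
    simp only [hX, submatrix_apply]
    congr 1 <;> exact Fin.ext (by simp; omega)
  have hsc : X.submatrix Fin.succ Fin.castSucc = A.submatrix
      (fun p : Fin (s+1) => (⟨(a+1) + p.1, by have := p.2; omega⟩ : Fin n))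
      (fun p : Fin (s+1) => (⟨b + p.1, by have := p.2; omega⟩ : Fin n)) := by
    ext p q
    simp only [hX, submatrix_apply]
    congr 1 <;> exact Fin.ext (by simp; omega)
  rw [cm_eq_det A (s+2) a b (by omega) (by omega),
    cm_eq_det A s (a+1) (b+1) (by omega) (by omega),
    cm_eq_det A (s+1) a b (by omega) (by omega),
    cm_eq_det A (s+1) (a+1) (b+1) (by omega) (by omega),
    cm_eq_det A (s+1) a (b+1) (by omega) (by omega),
    cm_eq_det A (s+1) (a+1) b (by omega) (by omega)]
  rw [← hinn, ← hcc, ← hss, ← hcs, ← hsc, ← hX]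
  apply DJ
  rw [hinn, ← cm_eq_det A s (a+1) (b+1) (by omega) (by omega)]
  exact h0

end CM

section Solid

variable {n k : ℕ}

private lemma pos_of_mul_pos_aux {x y : ℝ} (h : 0 < x * y) (hy : 0 < y) : 0 < x := by
  nlinarith

private lemma solid2 {A : Matrix (Fin n) (Fin n) ℝ} (hA : IsTPk A (k + 3))
    (a b : ℕ) (ha : a + (k+2) ≤ n) (hb : b + (k+2) ≤ n) :
    0 < cm A (k+1) a b * cm A (k+1) (a+1) (b+1) - cm A (k+1) a (b+1) * cm A (k+1) (a+1) b := by
  have h := cm_DJ A k a b (by omega) (by omega)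
    (ne_of_gt (cm_pos hA (by omega) (by omega) (by omega)))
  rw [← h]
  exact mul_pos (cm_pos hA (by omega) (by omega) (by omega))
    (cm_pos hA (by omega) (by omega) (by omega))

private noncomputable def d3 {n : ℕ} (A : Matrix (Fin n) (Fin n) ℝ) (kk a b c p q r : ℕ) : ℝ :=
  cm A kk a p * (cm A kk b q * cm A kk c r - cm A kk b r * cm A kk c q)
  - cm A kk a q * (cm A kk b p * cm A kk c r - cm A kk b r * cm A kk c p)
  + cm A kk a r * (cm A kk b p * cm A kk c q - cm A kk b q * cm A kk c p)

private lemma DJ3' (e00 e01 e02 e10 e11 e12 e20 e21 e22 : ℝ) :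
    (e00*(e11*e22-e12*e21) - e01*(e10*e22-e12*e20) + e02*(e10*e21-e11*e20)) * e11
      = (e00*e11-e01*e10)*(e11*e22-e12*e21) - (e01*e12-e02*e11)*(e10*e21-e11*e20) := by
  ring

set_option maxHeartbeats 1000000 in
private lemma solid3 {A : Matrix (Fin n) (Fin n) ℝ} (hA : IsTPk A (k + 3)) (hk : 1 ≤ k)
    (a b : ℕ) (ha : a + (k+3) ≤ n) (hb : b + (k+3) ≤ n) :
    0 < d3 A (k+1) a (a+1) (a+2) b (b+1) (b+2) := by
  obtain ⟨k', rfl⟩ : ∃ k', k = k' + 1 := ⟨k - 1, by omega⟩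
  have hW00 := cm_DJ A (k'+1) a b (by omega) (by omega)
    (ne_of_gt (cm_pos hA (by omega) (by omega) (by omega)))
  have hW11 := cm_DJ A (k'+1) (a+1) (b+1) (by omega) (by omega)
    (ne_of_gt (cm_pos hA (by omega) (by omega) (by omega)))
  have hW01 := cm_DJ A (k'+1) a (b+1) (by omega) (by omega)
    (ne_of_gt (cm_pos hA (by omega) (by omega) (by omega)))
  have hW10 := cm_DJ A (k'+1) (a+1) b (by omega) (by omega)
    (ne_of_gt (cm_pos hA (by omega) (by omega) (by omega)))
  have hE1 := cm_DJ A (k'+2) a b (by omega) (by omega)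
    (ne_of_gt (cm_pos hA (by omega) (by omega) (by omega)))
  have hE2 := cm_DJ A k' (a+1) (b+1) (by omega) (by omega)
    (ne_of_gt (cm_pos hA (by omega) (by omega) (by omega)))
  simp only [show k'+1+2 = k'+3 from rfl, show k'+1+1 = k'+2 from rfl,
    show k'+2+2 = k'+4 from rfl, show k'+2+1 = k'+3 from rfl,
    show a+1+1 = a+2 from rfl, show b+1+1 = b+2 from rfl] at hW00 hW11 hW01 hW10 hE1 hE2 ⊢
  set e00 := cm A (k'+2) a b
  set e01 := cm A (k'+2) a (b+1)
  set e02 := cm A (k'+2) a (b+2)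
  set e10 := cm A (k'+2) (a+1) b
  set e11 := cm A (k'+2) (a+1) (b+1)
  set e12 := cm A (k'+2) (a+1) (b+2)
  set e20 := cm A (k'+2) (a+2) b
  set e21 := cm A (k'+2) (a+2) (b+1)
  set e22 := cm A (k'+2) (a+2) (b+2)
  set P3 := cm A (k'+3) a b
  set Q3 := cm A (k'+3) (a+1) (b+1)
  set S3 := cm A (k'+3) a (b+1)
  set R3 := cm A (k'+3) (a+1) b
  set y1 := cm A (k'+1) (a+1) (b+1)
  set y2 := cm A (k'+1) (a+2) (b+2)
  set y3 := cm A (k'+1) (a+2) (b+1)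
  set y4 := cm A (k'+1) (a+1) (b+2)
  set d4 := cm A (k'+4) a b
  set z := cm A k' (a+2) (b+2)
  have key : (d3 A (k'+2) a (a+1) (a+2) b (b+1) (b+2)) * e11
      = (d4 * y1 * y2 + S3 * R3 * z) * e11 := by
    simp only [d3]
    linear_combination (-(e11*e22 - e12*e21)) * hW00 + (-(P3*y1)) * hW11
      + (e10*e21 - e11*e20) * hW01 + (S3*y4) * hW10
      + (-(y1*y2)) * hE1 + (-(S3*R3)) * hE2
  have he11 : 0 < e11 := cm_pos hA (by omega) (by omega) (by omega)
  rw [mul_right_cancel₀ (ne_of_gt he11) key]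
  have h1 := cm_pos hA (show k'+4 ≤ k'+1+3 by omega) (show a + (k'+4) ≤ n by omega)
    (show b + (k'+4) ≤ n by omega)
  have h2 := cm_pos hA (show k'+1 ≤ k'+1+3 by omega) (show (a+1) + (k'+1) ≤ n by omega)
    (show (b+1) + (k'+1) ≤ n by omega)
  have h3 := cm_pos hA (show k'+1 ≤ k'+1+3 by omega) (show (a+2) + (k'+1) ≤ n by omega)
    (show (b+2) + (k'+1) ≤ n by omega)
  have h4 := cm_pos hA (show k'+3 ≤ k'+1+3 by omega) (show a + (k'+3) ≤ n by omega)
    (show (b+1) + (k'+3) ≤ n by omega)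
  have h5 := cm_pos hA (show k'+3 ≤ k'+1+3 by omega) (show (a+1) + (k'+3) ≤ n by omega)
    (show b + (k'+3) ≤ n by omega)
  have h6 := cm_pos hA (show k' ≤ k'+1+3 by omega) (show (a+2) + k' ≤ n by omega)
    (show (b+2) + k' ≤ n by omega)
  positivity

end Solid

section Fekete

variable {n k : ℕ}

private lemma row2 {A : Matrix (Fin n) (Fin n) ℝ} (hA : IsTPk A (k + 3)) :
    ∀ (g i1 i2 j : ℕ), i1 < i2 → i2 - i1 ≤ g → i2 + (k+1) ≤ n → (j+1) + (k+1) ≤ n →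
    0 < cm A (k+1) i1 j * cm A (k+1) i2 (j+1) - cm A (k+1) i1 (j+1) * cm A (k+1) i2 j := by
  intro g
  induction g with
  | zero => intro i1 i2 j h hg _ _; omega
  | succ g IH =>
    intro i1 i2 j h hg hi hj
    rcases eq_or_lt_of_le (show i1 + 1 ≤ i2 from h) with he | hlt
    · subst he
      exact solid2 hA i1 j (by omega) (by omega)
    · have h1 := IH i1 (i1+1) j (by omega) (by omega) (by omega) hj
      have h2 := IH (i1+1) i2 j (by omega) (by omega) hi hj
      have hm := cm_pos hA (show k+1 ≤ k+3 by omega)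
        (show (i1+1)+(k+1) ≤ n by omega) (show (j+1)+(k+1) ≤ n by omega)
      have hc := cm_pos hA (show k+1 ≤ k+3 by omega)
        (show i2+(k+1) ≤ n by omega) (show (j+1)+(k+1) ≤ n by omega)
      have ha' := cm_pos hA (show k+1 ≤ k+3 by omega)
        (show i1+(k+1) ≤ n by omega) (show (j+1)+(k+1) ≤ n by omega)
      have key : (cm A (k+1) i1 j * cm A (k+1) i2 (j+1) - cm A (k+1) i1 (j+1) * cm A (k+1) i2 j)
            * cm A (k+1) (i1+1) (j+1)
          = (cm A (k+1) i1 j * cm A (k+1) (i1+1) (j+1)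
              - cm A (k+1) i1 (j+1) * cm A (k+1) (i1+1) j) * cm A (k+1) i2 (j+1)
            + (cm A (k+1) (i1+1) j * cm A (k+1) i2 (j+1)
              - cm A (k+1) (i1+1) (j+1) * cm A (k+1) i2 j) * cm A (k+1) i1 (j+1) := by
        ring
      have hpos : 0 < (cm A (k+1) i1 j * cm A (k+1) i2 (j+1)
          - cm A (k+1) i1 (j+1) * cm A (k+1) i2 j) * cm A (k+1) (i1+1) (j+1) := by
        rw [key]; exact add_pos (mul_pos h1 hc) (mul_pos h2 ha')
      exact pos_of_mul_pos_aux hpos hm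

private lemma min2 {A : Matrix (Fin n) (Fin n) ℝ} (hA : IsTPk A (k + 3)) :
    ∀ (g i1 i2 j1 j2 : ℕ), i1 < i2 → j1 < j2 → j2 - j1 ≤ g →
      i2 + (k+1) ≤ n → j2 + (k+1) ≤ n →
    0 < cm A (k+1) i1 j1 * cm A (k+1) i2 j2 - cm A (k+1) i1 j2 * cm A (k+1) i2 j1 := by
  intro g
  induction g with
  | zero => intro i1 i2 j1 j2 _ hj hg _ _; omega
  | succ g IH =>
    intro i1 i2 j1 j2 hi hj hg hbi hbj
    rcases eq_or_lt_of_le (show j1 + 1 ≤ j2 from hj) with he | hlt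
    · subst he
      exact row2 hA i2 i1 i2 j1 hi (by omega) hbi hbj
    · have h1 := IH i1 i2 j1 (j1+1) hi (by omega) (by omega) hbi (by omega)
      have h2 := IH i1 i2 (j1+1) j2 hi (by omega) (by omega) hbi hbj
      have hm := cm_pos hA (show k+1 ≤ k+3 by omega)
        (show i2+(k+1) ≤ n by omega) (show (j1+1)+(k+1) ≤ n by omega)
      have hc := cm_pos hA (show k+1 ≤ k+3 by omega)
        (show i2+(k+1) ≤ n by omega) (show j2+(k+1) ≤ n by omega)
      have ha' := cm_pos hA (show k+1 ≤ k+3 by omega)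
        (show i2+(k+1) ≤ n by omega) (show j1+(k+1) ≤ n by omega)
      have key : (cm A (k+1) i1 j1 * cm A (k+1) i2 j2 - cm A (k+1) i1 j2 * cm A (k+1) i2 j1)
            * cm A (k+1) i2 (j1+1)
          = (cm A (k+1) i1 j1 * cm A (k+1) i2 (j1+1)
              - cm A (k+1) i1 (j1+1) * cm A (k+1) i2 j1) * cm A (k+1) i2 j2
            + (cm A (k+1) i1 (j1+1) * cm A (k+1) i2 j2
              - cm A (k+1) i1 j2 * cm A (k+1) i2 (j1+1)) * cm A (k+1) i2 j1 := by
        ring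
      have hpos : 0 < (cm A (k+1) i1 j1 * cm A (k+1) i2 j2
          - cm A (k+1) i1 j2 * cm A (k+1) i2 j1) * cm A (k+1) i2 (j1+1) := by
        rw [key]; exact add_pos (mul_pos h1 hc) (mul_pos h2 ha')
      exact pos_of_mul_pos_aux hpos hm

private lemma row3 {A : Matrix (Fin n) (Fin n) ℝ} (hA : IsTPk A (k + 3)) (hk : 1 ≤ k) :
    ∀ (g i1 i2 i3 j : ℕ), i1 < i2 → i2 < i3 → i3 - i1 ≤ g →
      i3 + (k+1) ≤ n → (j+2) + (k+1) ≤ n →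
    0 < d3 A (k+1) i1 i2 i3 j (j+1) (j+2) := by
  intro g
  induction g with
  | zero => intro i1 i2 i3 j h1 h2 hg _ _; omega
  | succ g IH =>
    intro i1 i2 i3 j h12 h23 hg hbi hbj
    by_cases hsolid : i2 = i1 + 1 ∧ i3 = i2 + 1
    · obtain ⟨rfl, rfl⟩ := hsolid
      have := solid3 hA hk i1 j (by omega) (by omega)
      simpa only [show i1+1+1 = i1+2 from rfl] using this
    · -- a gap exists
      have hd2 : ∀ x y : ℕ, x < y → y + (k+1) ≤ n →
          0 < cm A (k+1) x j * cm A (k+1) y (j+1) - cm A (k+1) x (j+1) * cm A (k+1) y j := by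
        intro x y hxy hy
        exact min2 hA (j+1) x y j (j+1) hxy (by omega) (by omega) hy (by omega)
      rcases Nat.lt_or_ge (i1+1) i2 with hgap | hng
      · -- gap between i1 and i2, insert t = i1+1
        have hT1 := IH (i1+1) i2 i3 j hgap h23 (by omega) hbi hbj
        have hT2 := IH i1 (i1+1) i2 j (by omega) hgap (by omega) (by omega) hbj
        have hc1 := hd2 i1 i2 (by omega) (by omega)
        have hc2 := hd2 i2 i3 (by omega) (by omega)
        have hmid := hd2 (i1+1) i2 hgap (by omega)
        have key : d3 A (k+1) i1 i2 i3 j (j+1) (j+2)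
              * (cm A (k+1) (i1+1) j * cm A (k+1) i2 (j+1)
                 - cm A (k+1) (i1+1) (j+1) * cm A (k+1) i2 j)
            = d3 A (k+1) (i1+1) i2 i3 j (j+1) (j+2)
              * (cm A (k+1) i1 j * cm A (k+1) i2 (j+1)
                 - cm A (k+1) i1 (j+1) * cm A (k+1) i2 j)
            + d3 A (k+1) i1 (i1+1) i2 j (j+1) (j+2)
              * (cm A (k+1) i2 j * cm A (k+1) i3 (j+1)
                 - cm A (k+1) i2 (j+1) * cm A (k+1) i3 j) := by
          simp only [d3]; ring
        have hpos : 0 < d3 A (k+1) i1 i2 i3 j (j+1) (j+2)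
            * (cm A (k+1) (i1+1) j * cm A (k+1) i2 (j+1)
               - cm A (k+1) (i1+1) (j+1) * cm A (k+1) i2 j) := by
          rw [key]; exact add_pos (mul_pos hT1 hc1) (mul_pos hT2 hc2)
        exact pos_of_mul_pos_aux hpos hmid
      · -- i2 = i1+1, gap between i2 and i3, insert t = i2+1
        have hi2 : i2 = i1 + 1 := by omega
        have hgap' : i2 + 1 < i3 := by
          rcases Nat.lt_or_ge (i2+1) i3 with h | h
          · exact h
          · exact absurd ⟨hi2, by omega⟩ hsolid
        have hT1 := IH i2 (i2+1) i3 j (by omega) hgap' (by omega) hbi hbj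
        have hT2 := IH i1 i2 (i2+1) j h12 (by omega) (by omega) (by omega) hbj
        have hc1 := hd2 i1 i2 h12 (by omega)
        have hc2 := hd2 i2 i3 h23 (by omega)
        have hmid := hd2 i2 (i2+1) (by omega) (by omega)
        have key : d3 A (k+1) i1 i2 i3 j (j+1) (j+2)
              * (cm A (k+1) i2 j * cm A (k+1) (i2+1) (j+1)
                 - cm A (k+1) i2 (j+1) * cm A (k+1) (i2+1) j)
            = d3 A (k+1) i2 (i2+1) i3 j (j+1) (j+2)
              * (cm A (k+1) i1 j * cm A (k+1) i2 (j+1)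
                 - cm A (k+1) i1 (j+1) * cm A (k+1) i2 j)
            + d3 A (k+1) i1 i2 (i2+1) j (j+1) (j+2)
              * (cm A (k+1) i2 j * cm A (k+1) i3 (j+1)
                 - cm A (k+1) i2 (j+1) * cm A (k+1) i3 j) := by
          simp only [d3]; ring
        have hpos : 0 < d3 A (k+1) i1 i2 i3 j (j+1) (j+2)
            * (cm A (k+1) i2 j * cm A (k+1) (i2+1) (j+1)
               - cm A (k+1) i2 (j+1) * cm A (k+1) (i2+1) j) := by
          rw [key]; exact add_pos (mul_pos hT1 hc1) (mul_pos hT2 hc2)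
        exact pos_of_mul_pos_aux hpos hmid

private lemma min3 {A : Matrix (Fin n) (Fin n) ℝ} (hA : IsTPk A (k + 3)) (hk : 1 ≤ k) :
    ∀ (g i1 i2 i3 j1 j2 j3 : ℕ), i1 < i2 → i2 < i3 → j1 < j2 → j2 < j3 → j3 - j1 ≤ g →
      i3 + (k+1) ≤ n → j3 + (k+1) ≤ n →
    0 < d3 A (k+1) i1 i2 i3 j1 j2 j3 := by
  intro g
  induction g with
  | zero => intro i1 i2 i3 j1 j2 j3 _ _ h1 h2 hg _ _; omega
  | succ g IH =>
    intro i1 i2 i3 j1 j2 j3 hi12 hi23 hj12 hj23 hg hbi hbj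
    by_cases hsolid : j2 = j1 + 1 ∧ j3 = j2 + 1
    · obtain ⟨rfl, rfl⟩ := hsolid
      exact row3 hA hk i3 i1 i2 i3 j1 hi12 hi23 (by omega) hbi
        (by simpa only [show j1+1+1 = j1+2 from rfl] using hbj)
    · have hd2 : ∀ x y : ℕ, x < y → y + (k+1) ≤ n →
          0 < cm A (k+1) i1 x * cm A (k+1) i2 y - cm A (k+1) i1 y * cm A (k+1) i2 x := by
        intro x y hxy hy
        exact min2 hA y i1 i2 x y hi12 hxy (by omega) (by omega) hy
      rcases Nat.lt_or_ge (j1+1) j2 with hgap | hng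
      · have hT1 := IH i1 i2 i3 (j1+1) j2 j3 hi12 hi23 hgap hj23 (by omega) hbi hbj
        have hT2 := IH i1 i2 i3 j1 (j1+1) j2 hi12 hi23 (by omega) hgap (by omega) hbi (by omega)
        have hc1 := hd2 j1 j2 hj12 (by omega)
        have hc2 := hd2 j2 j3 hj23 (by omega)
        have hmid := hd2 (j1+1) j2 hgap (by omega)
        have key : d3 A (k+1) i1 i2 i3 j1 j2 j3
              * (cm A (k+1) i1 (j1+1) * cm A (k+1) i2 j2
                 - cm A (k+1) i1 j2 * cm A (k+1) i2 (j1+1))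
            = d3 A (k+1) i1 i2 i3 (j1+1) j2 j3
              * (cm A (k+1) i1 j1 * cm A (k+1) i2 j2
                 - cm A (k+1) i1 j2 * cm A (k+1) i2 j1)
            + d3 A (k+1) i1 i2 i3 j1 (j1+1) j2
              * (cm A (k+1) i1 j2 * cm A (k+1) i2 j3
                 - cm A (k+1) i1 j3 * cm A (k+1) i2 j2) := by
          simp only [d3]; ring
        have hpos : 0 < d3 A (k+1) i1 i2 i3 j1 j2 j3
            * (cm A (k+1) i1 (j1+1) * cm A (k+1) i2 j2
               - cm A (k+1) i1 j2 * cm A (k+1) i2 (j1+1)) := by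
          rw [key]; exact add_pos (mul_pos hT1 hc1) (mul_pos hT2 hc2)
        exact pos_of_mul_pos_aux hpos hmid
      · have hj2 : j2 = j1 + 1 := by omega
        have hgap' : j2 + 1 < j3 := by
          rcases Nat.lt_or_ge (j2+1) j3 with h | h
          · exact h
          · exact absurd ⟨hj2, by omega⟩ hsolid
        have hT1 := IH i1 i2 i3 j2 (j2+1) j3 hi12 hi23 (by omega) hgap' (by omega) hbi hbj
        have hT2 := IH i1 i2 i3 j1 j2 (j2+1) hi12 hi23 hj12 (by omega) (by omega) hbi (by omega)
        have hc1 := hd2 j1 j2 hj12 (by omega)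
        have hc2 := hd2 j2 j3 hj23 (by omega)
        have hmid := hd2 j2 (j2+1) (by omega) (by omega)
        have key : d3 A (k+1) i1 i2 i3 j1 j2 j3
              * (cm A (k+1) i1 j2 * cm A (k+1) i2 (j2+1)
                 - cm A (k+1) i1 (j2+1) * cm A (k+1) i2 j2)
            = d3 A (k+1) i1 i2 i3 j2 (j2+1) j3
              * (cm A (k+1) i1 j1 * cm A (k+1) i2 j2
                 - cm A (k+1) i1 j2 * cm A (k+1) i2 j1)
            + d3 A (k+1) i1 i2 i3 j1 j2 (j2+1)
              * (cm A (k+1) i1 j2 * cm A (k+1) i2 j3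
                 - cm A (k+1) i1 j3 * cm A (k+1) i2 j2) := by
          simp only [d3]; ring
        have hpos : 0 < d3 A (k+1) i1 i2 i3 j1 j2 j3
            * (cm A (k+1) i1 j2 * cm A (k+1) i2 (j2+1)
               - cm A (k+1) i1 (j2+1) * cm A (k+1) i2 j2) := by
          rw [key]; exact add_pos (mul_pos hT1 hc1) (mul_pos hT2 hc2)
        exact pos_of_mul_pos_aux hpos hmid

private lemma Dmat_eq {A : Matrix (Fin n) (Fin n) ℝ} (i j : Fin (n - k)) :
    Dmat A k i j = cm A (k+1) i.1 j.1 := by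
  have hi := i.2; have hj := j.2
  rw [cm, dif_pos ⟨by omega, by omega⟩]
  rfl

end Fekete

/-- **Theorem B(2).** If `A` is `TP_{k+3}` for some `k ≥ 1`, then `D_k(A)` is `TP₃`. -/
theorem Dmat_TP3 {n k : ℕ} (hk : 1 ≤ k) (A : Matrix (Fin n) (Fin n) ℝ)
    (hA : IsTPk A (k + 3)) : IsTPk (Dmat A k) 3 := by
  intro l hl r c hr hc
  interval_cases l
  · simp [Matrix.det_fin_zero]
  · rw [det_fin_one]
    simp only [submatrix_apply, Dmat_eq]
    have h0 := (r 0).2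
    have h1 := (c 0).2
    exact cm_pos hA (by omega) (by omega) (by omega)
  · rw [det_fin_two]
    simp only [submatrix_apply, Dmat_eq]
    have hr01 : (r 0).1 < (r 1).1 := hr (show (0 : Fin 2) < 1 by decide)
    have hc01 : (c 0).1 < (c 1).1 := hc (show (0 : Fin 2) < 1 by decide)
    have hb1 := (r 1).2
    have hb2 := (c 1).2
    have := min2 hA (c 1).1 (r 0).1 (r 1).1 (c 0).1 (c 1).1 hr01 hc01 (by omega)
      (by omega) (by omega)
    linarith [this]
  · rw [det_fin_three]
    simp only [submatrix_apply, Dmat_eq]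
    have hr01 : (r 0).1 < (r 1).1 := hr (show (0 : Fin 3) < 1 by decide)
    have hr12 : (r 1).1 < (r 2).1 := hr (show (1 : Fin 3) < 2 by decide)
    have hc01 : (c 0).1 < (c 1).1 := hc (show (0 : Fin 3) < 1 by decide)
    have hc12 : (c 1).1 < (c 2).1 := hc (show (1 : Fin 3) < 2 by decide)
    have hb1 := (r 2).2
    have hb2 := (c 2).2
    have h := min3 hA hk (c 2).1 (r 0).1 (r 1).1 (r 2).1 (c 0).1 (c 1).1 (c 2).1
      hr01 hr12 hc01 hc12 (by omega) (by omega) (by omega)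
    simp only [d3] at h
    linarith [h]
end

section
/- If an n-by-n real matrix A is TP_1 (all entries positive) and D_k(A) is TP_1 (all entries positive) for every 1 ≤ k ≤ n-1, then A is totally positive. -/
open Matrix

open Matrix

namespace FeketeAux

lemma succAbove_val {m : ℕ} (j : Fin (m+1)) (i : Fin m) :
    (j.succAbove i : ℕ) = if (i:ℕ) < (j:ℕ) then (i:ℕ) else (i:ℕ)+1 := by
  rcases lt_or_ge (Fin.castSucc i) j with h|h
  · rw [Fin.succAbove_of_castSucc_lt _ _ h]
    simp only [Fin.coe_castSucc]
    rw [if_pos (by simpa [Fin.lt_def] using h)]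
  · rw [Fin.succAbove_of_le_castSucc _ _ h]
    simp only [Fin.val_succ]
    rw [if_neg (by simp only [Fin.le_def, Fin.coe_castSucc] at h; omega)]

/-- removes positions `0` and `last`. -/
def rmMid (m : ℕ) : Fin (m+1) → Fin (m+3) :=
  fun i => ⟨i.1+1, by have := i.2; omega⟩

/-- removes positions `p` and `last` (for `0 < p < last`). -/
def rmP (m p : ℕ) : Fin (m+1) → Fin (m+3) :=
  fun i => if i.1 < p then ⟨i.1, by have := i.2; omega⟩ else ⟨i.1+1, by have := i.2; omega⟩

/-- removes positions `0` and `p` (for `0 < p < last`). -/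
def rmZP (m p : ℕ) : Fin (m+1) → Fin (m+3) :=
  fun i => if i.1+1 < p then ⟨i.1+1, by have := i.2; omega⟩ else ⟨i.1+2, by have := i.2; omega⟩

/-- removes positions `0`, `p` and `last`. -/
def nu (m p : ℕ) : Fin m → Fin (m+3) :=
  fun i => if i.1+1 < p then ⟨i.1+1, by have := i.2; omega⟩ else ⟨i.1+2, by have := i.2; omega⟩

lemma rmMid_strictMono (m : ℕ) : StrictMono (rmMid m) := by
  intro a b h; simp only [rmMid, Fin.lt_def] at *; omega

lemma rmP_strictMono (m p : ℕ) : StrictMono (rmP m p) := by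
  intro a b h; simp only [rmP, Fin.lt_def] at *; split_ifs <;> simp <;> omega

lemma rmZP_strictMono (m p : ℕ) : StrictMono (rmZP m p) := by
  intro a b h; simp only [rmZP, Fin.lt_def] at *; split_ifs <;> simp <;> omega

lemma det_updateRow_finset_sum {k : ℕ} (M : Matrix (Fin k) (Fin k) ℝ) (j : Fin k)
    {ι : Type*} (s : Finset ι) (f : ι → Fin k → ℝ) :
    (M.updateRow j (∑ x ∈ s, f x)).det = ∑ x ∈ s, (M.updateRow j (f x)).det := by
  classical
  induction s using Finset.induction_on with
  | empty =>
      simp only [Finset.sum_empty]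
      exact Matrix.det_eq_zero_of_row_eq_zero j (by simp)
  | insert _ _ hx ih =>
      rw [Finset.sum_insert hx, Matrix.det_updateRow_add, ih, Finset.sum_insert hx]

lemma det_insertNth {m : ℕ} (j : Fin (m+1)) (u : Fin (m+1) → ℝ) (G : Fin m → Fin (m+1) → ℝ) :
    (Matrix.of (Fin.insertNth j u G)).det = (-1:ℝ)^(j:ℕ) * (Matrix.of (Fin.cons u G)).det := by
  have hfun : Fin.insertNth j u G = fun z => (Fin.cons u G : Fin (m+1) → Fin (m+1) → ℝ) (j.cycleRange z) := by
    refine funext (Fin.succAboveCases j ?_ ?_)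
    · rw [Fin.insertNth_apply_same, Fin.cycleRange_self, Fin.cons_zero]
    · intro i
      rw [Fin.insertNth_apply_succAbove, Fin.cycleRange_succAbove, Fin.cons_succ]
  have : (Matrix.of (Fin.insertNth j u G)) = (Matrix.of (Fin.cons u G)).submatrix (j.cycleRange) id := by
    ext x y; rw [hfun]; rfl
  rw [this, Matrix.det_permute, Fin.sign_cycleRange]
  push_cast
  ring

/-- The key three-term determinantal (Plücker-type) identity. -/
theorem key {m : ℕ} (w : Fin (m+3) → Fin (m+2) → ℝ) (p : Fin (m+3))
    (hp0 : 0 < p) (hpl : p < Fin.last (m+2)) :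
    (Matrix.of (fun i j => w (p.succAbove i) j)).det *
      (Matrix.of (fun i j => w (rmMid m i) (Fin.succ j))).det
    = (Matrix.of (fun i j => w (Fin.succAbove 0 i) j)).det *
      (Matrix.of (fun i j => w (rmP m p.1 i) (Fin.succ j))).det
    + (Matrix.of (fun i j => w (Fin.succAbove (Fin.last (m+2)) i) j)).det *
      (Matrix.of (fun i j => w (rmZP m p.1 i) (Fin.succ j))).det := by
  have hp0' : 0 < p.1 := hp0
  have hpl' : p.1 < m + 2 := hpl
  -- coefficients
  set a : Fin (m+3) → ℝ := fun x => (-1:ℝ)^(x:ℕ) * (Matrix.of (fun i j => w (x.succAbove i) j)).det with ha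
  -- the vector identity
  have hvec : ∀ cc : Fin (m+2), ∑ x : Fin (m+3), a x * w x cc = 0 := by
    intro cc
    set B : Matrix (Fin (m+3)) (Fin (m+3)) ℝ := fun x j => Fin.cases (w x cc) (w x) j with hB
    have hdet0 : B.det = 0 := by
      refine Matrix.det_zero_of_column_eq (i := 0) (j := Fin.succ cc) (Fin.succ_ne_zero cc).symm ?_
      intro k; simp [hB]
    have hexp := Matrix.det_succ_column_zero B
    rw [hdet0] at hexp
    have hsub : ∀ x : Fin (m+3), (B.submatrix x.succAbove Fin.succ) = Matrix.of (fun i j => w (x.succAbove i) j) := by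
      intro x; ext i j; simp [hB, Matrix.submatrix]
    calc ∑ x : Fin (m+3), a x * w x cc
        = ∑ x : Fin (m+3), (-1:ℝ)^(x:ℕ) * B x 0 * (B.submatrix x.succAbove Fin.succ).det := by
          refine Finset.sum_congr rfl fun x _ => ?_
          rw [hsub x, ha]; simp [hB]; ring
      _ = 0 := hexp.symm
  -- the fixed lower rows
  set G : Fin m → Fin (m+1) → ℝ := fun i j => w (nu m p.1 i) (Fin.succ j) with hG
  set F : (Fin (m+1) → ℝ) → ℝ := fun v => (Matrix.of (Fin.cons v G)).det with hF
  set π : (Fin (m+2) → ℝ) → (Fin (m+1) → ℝ) := fun u j => u (Fin.succ j) with hπ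
  -- linearity of F
  set M0 : Matrix (Fin (m+1)) (Fin (m+1)) ℝ := Matrix.of (Fin.cons (0 : Fin (m+1) → ℝ) G) with hM0
  have hcons_upd : ∀ v : Fin (m+1) → ℝ,
      Matrix.of (Fin.cons v G) = M0.updateRow 0 v := by
    intro v; ext i j
    refine Fin.cases ?_ (fun i => ?_) i
    · simp [hM0]
    · simp [hM0, Matrix.updateRow_apply, Fin.succ_ne_zero]
  have hFsum : ∑ x : Fin (m+3), a x * F (π (w x)) = 0 := by
    have hzero : (∑ x : Fin (m+3), a x • π (w x)) = 0 := by
      funext j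
      have := hvec (Fin.succ j)
      simpa [Finset.sum_apply, hπ] using this
    calc ∑ x : Fin (m+3), a x * F (π (w x))
        = ∑ x : Fin (m+3), (M0.updateRow 0 (a x • π (w x))).det := by
          refine Finset.sum_congr rfl fun x _ => ?_
          show a x * (Matrix.of (Fin.cons (π (w x)) G)).det = _
          rw [hcons_upd, Matrix.det_updateRow_smul]
      _ = (M0.updateRow 0 (∑ x : Fin (m+3), a x • π (w x))).det := by
          rw [det_updateRow_finset_sum]
      _ = 0 := by rw [hzero]; exact Matrix.det_eq_zero_of_row_eq_zero 0 (by simp)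
  -- vanishing of middle terms
  have hmid : ∀ x : Fin (m+3), x ≠ 0 → x ≠ p → x ≠ Fin.last (m+2) → F (π (w x)) = 0 := by
    intro x hx0 hxp hxl
    have hx0' : x.1 ≠ 0 := fun h => hx0 (Fin.ext h)
    have hxp' : x.1 ≠ p.1 := fun h => hxp (Fin.ext h)
    have hxl' : x.1 ≠ m+2 := fun h => hxl (Fin.ext h)
    have hxlt := x.2
    -- find the index i with nu i = x
    have : ∃ i : Fin m, nu m p.1 i = x := by
      rcases lt_or_gt_of_ne hxp' with h|h
      · refine ⟨⟨x.1 - 1, by omega⟩, ?_⟩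
        simp only [nu]; rw [if_pos (by first | omega | (simp; omega))]
        exact Fin.ext (by first | omega | (simp; omega))
      · refine ⟨⟨x.1 - 2, by omega⟩, ?_⟩
        simp only [nu]; rw [if_neg (by first | omega | (simp; omega))]
        exact Fin.ext (by first | omega | (simp; omega))
    rcases this with ⟨i, hi⟩
    refine Matrix.det_zero_of_row_eq (i := 0) (j := Fin.succ i) (Fin.succ_ne_zero i).symm ?_
    funext j
    show (Fin.cons (π (w x)) G : Fin (m+1) → Fin (m+1) → ℝ) 0 j = (Fin.cons (π (w x)) G : Fin (m+1) → Fin (m+1) → ℝ) (Fin.succ i) j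
    simp only [Fin.cons_zero, Fin.cons_succ, hπ, hG, hi]
  -- survivor x = 0
  have hs0 : F (π (w 0)) = (Matrix.of (fun i j => w (rmP m p.1 i) (Fin.succ j))).det := by
    rw [hF]
    have hmx : Matrix.of (Fin.cons (π (w 0)) G)
        = Matrix.of (fun i j => w (rmP m p.1 i) (Fin.succ j)) := by
      ext i j
      refine Fin.cases ?_ (fun i0 => ?_) i
      · have h1 : rmP m p.1 0 = (0 : Fin (m+3)) := by
          unfold rmP
          rw [if_pos (by simpa using hp0')]
          rfl
        simp [h1, hπ]
      · have h1 : rmP m p.1 (Fin.succ i0) = nu m p.1 i0 := by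
          simp only [rmP, nu, Fin.val_succ]
          try split_ifs <;> try rfl
        simp [h1, hG]
    show (Matrix.of (Fin.cons (π (w 0)) G)).det = _
    rw [hmx]
  -- survivor x = p
  have hsp : (Matrix.of (fun i j => w (rmMid m i) (Fin.succ j))).det
      = (-1:ℝ)^(p.1-1) * F (π (w p)) := by
    set p' : Fin (m+1) := ⟨p.1-1, by omega⟩ with hp'
    have hmx : Matrix.of (fun i j => w (rmMid m i) (Fin.succ j))
        = Matrix.of (Fin.insertNth p' (π (w p)) G) := by
      ext i j
      refine Fin.succAboveCases p' ?_ (fun i0 => ?_) i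
      · have h1 : rmMid m p' = p := by simp only [rmMid]; exact Fin.ext (by simp [hp']; omega)
        simp [h1, Fin.insertNth_apply_same, hπ]
      · have h1 : rmMid m (p'.succAbove i0) = nu m p.1 i0 := by
          apply Fin.ext
          simp only [rmMid, nu, succAbove_val]
          have := i0.2
          split_ifs <;> simp [hp'] at * <;> try omega
        simp only [Matrix.of_apply, Fin.insertNth_apply_succAbove, h1, hG]
    rw [hmx, det_insertNth]
  -- survivor x = last
  have hsl : (Matrix.of (fun i j => w (rmZP m p.1 i) (Fin.succ j))).det
      = (-1:ℝ)^m * F (π (w (Fin.last (m+2)))) := by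
    have hmx : Matrix.of (fun i j => w (rmZP m p.1 i) (Fin.succ j))
        = Matrix.of (Fin.insertNth (Fin.last m) (π (w (Fin.last (m+2)))) G) := by
      ext i j
      refine Fin.succAboveCases (Fin.last m) ?_ (fun i0 => ?_) i
      · have h1 : rmZP m p.1 (Fin.last m) = Fin.last (m+2) := by
          simp only [rmZP]; rw [if_neg (by simp [Fin.last]; omega)]
          exact Fin.ext (by simp [Fin.last])
        simp [h1, Fin.insertNth_apply_same, hπ]
      · have h1 : rmZP m p.1 ((Fin.last m).succAbove i0) = nu m p.1 i0 := by
          apply Fin.ext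
          have h2 : ((Fin.last m).succAbove i0).1 = i0.1 := by
            rw [Fin.succAbove_last]; simp
          simp only [rmZP, nu]
          have := i0.2
          split_ifs <;> simp [h2] at * <;> try omega
        simp only [Matrix.of_apply, Fin.insertNth_apply_succAbove, h1, hG]
    rw [hmx, det_insertNth]
    rw [show ((Fin.last m : Fin (m+1)) : ℕ) = m from rfl]
  -- reduce the sum to three terms
  classical
  have hsum3 : a 0 * F (π (w 0)) + a p * F (π (w p))
      + a (Fin.last (m+2)) * F (π (w (Fin.last (m+2)))) = 0 := by
    have h0p : (0 : Fin (m+3)) ≠ p := (Fin.lt_iff_val_lt_val.mp hp0).ne ∘ fun h => by rw [h]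
    have hsubset : ({0, p, Fin.last (m+2)} : Finset (Fin (m+3))) ⊆ Finset.univ := Finset.subset_univ _
    have hvan : ∀ x ∈ (Finset.univ : Finset (Fin (m+3))),
        x ∉ ({0, p, Fin.last (m+2)} : Finset (Fin (m+3))) → a x * F (π (w x)) = 0 := by
      intro x _ hx
      simp only [Finset.mem_insert, Finset.mem_singleton, not_or] at hx
      rw [hmid x hx.1 hx.2.1 hx.2.2, mul_zero]
    have heq := Finset.sum_subset hsubset hvan
    rw [hFsum] at heq
    have h1 : (0 : Fin (m+3)) ∉ ({p, Fin.last (m+2)} : Finset (Fin (m+3))) := by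
      simp only [Finset.mem_insert, Finset.mem_singleton, not_or]
      constructor
      · exact fun h => absurd (h ▸ hp0) (lt_irrefl _)
      · intro h; have := congrArg Fin.val h; simp [Fin.last] at this
    have h2 : p ∉ ({Fin.last (m+2)} : Finset (Fin (m+3))) := by
      simp only [Finset.mem_singleton]
      exact fun h => absurd (h ▸ hpl) (lt_irrefl _)
    rw [Finset.sum_insert h1, Finset.sum_insert h2, Finset.sum_singleton] at heq
    linarith [heq]
  -- final bookkeeping
  have flip : ∀ (k : ℕ) (X Y : ℝ), X = (-1:ℝ)^k * Y → Y = (-1:ℝ)^k * X := by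
    intro k X Y h
    rw [h, ← mul_assoc, ← pow_add]
    rw [Even.neg_one_pow ⟨k, rfl⟩, one_mul]
  have hFp := flip _ _ _ hsp
  have hFl := flip _ _ _ hsl
  have ha0 : a 0 = (Matrix.of (fun i j => w (Fin.succAbove 0 i) j)).det := by
    rw [ha]; simp
  have hap : a p = (-1:ℝ)^(p.1) * (Matrix.of (fun i j => w (p.succAbove i) j)).det := rfl
  have hal : a (Fin.last (m+2)) = (-1:ℝ)^(m+2)
      * (Matrix.of (fun i j => w ((Fin.last (m+2)).succAbove i) j)).det := by
    rw [ha]; simp [Fin.last]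
  rw [ha0, hap, hal, hs0, hFp, hFl] at hsum3
  have e1 : (-1:ℝ)^(p.1) * (-1:ℝ)^(p.1-1) = -1 := by
    rw [← pow_add]
    have h : p.1 + (p.1 - 1) = 2*(p.1-1)+1 := by omega
    rw [h, pow_succ, pow_mul]
    norm_num
  have e2 : (-1:ℝ)^(m+2) * (-1:ℝ)^m = 1 := by
    rw [← pow_add]
    have h : m + 2 + m = 2*(m+1) := by omega
    rw [h, pow_mul]
    norm_num
  set dT := (Matrix.of (fun i j => w (p.succAbove i) j)).det with hdT
  set dM := (Matrix.of (fun i j => w (rmMid m i) (Fin.succ j))).det with hdM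
  set d0 := (Matrix.of (fun i j => w (Fin.succAbove 0 i) j)).det with hd0
  set dP := (Matrix.of (fun i j => w (rmP m p.1 i) (Fin.succ j))).det with hdP
  set dL := (Matrix.of (fun i j => w ((Fin.last (m+2)).succAbove i) j)).det with hdL
  set dZ := (Matrix.of (fun i j => w (rmZP m p.1 i) (Fin.succ j))).det with hdZ
  have h3 : (-1:ℝ)^(p.1) * dT * ((-1:ℝ)^(p.1-1) * dM) = -(dT * dM) := by
    have hh : (-1:ℝ)^(p.1) * dT * ((-1:ℝ)^(p.1-1) * dM)
        = ((-1:ℝ)^(p.1) * (-1:ℝ)^(p.1-1)) * (dT * dM) := by ring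
    rw [hh, e1]; ring
  have h4 : (-1:ℝ)^(m+2) * dL * ((-1:ℝ)^m * dZ) = dL * dZ := by
    have hh : (-1:ℝ)^(m+2) * dL * ((-1:ℝ)^m * dZ)
        = ((-1:ℝ)^(m+2) * (-1:ℝ)^m) * (dL * dZ) := by ring
    rw [hh, e2]; ring
  rw [h3, h4] at hsum3
  linarith

/-! ### Application to minors of a matrix -/

lemma keyStep {n m : ℕ} (M : Matrix (Fin n) (Fin n) ℝ)
    (hlow : ∀ (r c : Fin (m+1) → Fin n), StrictMono r → StrictMono c →
      0 < (M.submatrix r c).det)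
    (ρ : Fin (m+3) → Fin n) (c : Fin (m+2) → Fin n)
    (hρ : StrictMono ρ) (hc : StrictMono c) (p : Fin (m+3))
    (hp0 : 0 < p) (hpl : p < Fin.last (m+2))
    (h1 : 0 < (M.submatrix (ρ ∘ Fin.succAbove 0) c).det)
    (h2 : 0 < (M.submatrix (ρ ∘ (Fin.last (m+2)).succAbove) c).det) :
    0 < (M.submatrix (ρ ∘ p.succAbove) c).det := by
  set w : Fin (m+3) → Fin (m+2) → ℝ := fun x y => M (ρ x) (c y) with hw
  have hkey := key w p hp0 hpl
  have hcs : StrictMono (c ∘ Fin.succ) := hc.comp Fin.strictMono_succ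
  have hXc : 0 < (Matrix.of (fun i j => w (rmMid m i) (Fin.succ j))).det :=
    hlow (ρ ∘ rmMid m) (c ∘ Fin.succ) (hρ.comp (rmMid_strictMono m)) hcs
  have hXa : 0 < (Matrix.of (fun i j => w (rmP m p.1 i) (Fin.succ j))).det :=
    hlow (ρ ∘ rmP m p.1) (c ∘ Fin.succ) (hρ.comp (rmP_strictMono m p.1)) hcs
  have hXb : 0 < (Matrix.of (fun i j => w (rmZP m p.1 i) (Fin.succ j))).det :=
    hlow (ρ ∘ rmZP m p.1) (c ∘ Fin.succ) (hρ.comp (rmZP_strictMono m p.1)) hcs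
  have h1' : 0 < (Matrix.of (fun i j => w (Fin.succAbove 0 i) j)).det := h1
  have h2' : 0 < (Matrix.of (fun i j => w ((Fin.last (m+2)).succAbove i) j)).det := h2
  show 0 < (Matrix.of (fun i j => w (p.succAbove i) j)).det
  nlinarith [hkey, hXc, hXa, hXb, h1', h2', mul_pos h1' hXa, mul_pos h2' hXb]

lemma keyStepT {n m : ℕ} (M : Matrix (Fin n) (Fin n) ℝ)
    (hlow : ∀ (r c : Fin (m+1) → Fin n), StrictMono r → StrictMono c →
      0 < (M.submatrix r c).det)
    (r : Fin (m+2) → Fin n) (γ : Fin (m+3) → Fin n)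
    (hr : StrictMono r) (hγ : StrictMono γ) (p : Fin (m+3))
    (hp0 : 0 < p) (hpl : p < Fin.last (m+2))
    (h1 : 0 < (M.submatrix r (γ ∘ Fin.succAbove 0)).det)
    (h2 : 0 < (M.submatrix r (γ ∘ (Fin.last (m+2)).succAbove)).det) :
    0 < (M.submatrix r (γ ∘ p.succAbove)).det := by
  have hlowT : ∀ (r c : Fin (m+1) → Fin n), StrictMono r → StrictMono c →
      0 < (Mᵀ.submatrix r c).det := by
    intro u v hu hv
    rw [show Mᵀ.submatrix u v = (M.submatrix v u)ᵀ from rfl, Matrix.det_transpose]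
    exact hlow v u hv hu
  have h1T : 0 < (Mᵀ.submatrix (γ ∘ Fin.succAbove 0) r).det := by
    rw [show Mᵀ.submatrix (γ ∘ Fin.succAbove 0) r = (M.submatrix r (γ ∘ Fin.succAbove 0))ᵀ from rfl,
      Matrix.det_transpose]; exact h1
  have h2T : 0 < (Mᵀ.submatrix (γ ∘ (Fin.last (m+2)).succAbove) r).det := by
    rw [show Mᵀ.submatrix (γ ∘ (Fin.last (m+2)).succAbove) r
      = (M.submatrix r (γ ∘ (Fin.last (m+2)).succAbove))ᵀ from rfl,
      Matrix.det_transpose]; exact h2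
  have := keyStep Mᵀ hlowT γ r hγ hr p hp0 hpl h1T h2T
  rw [show Mᵀ.submatrix (γ ∘ p.succAbove) r = (M.submatrix r (γ ∘ p.succAbove))ᵀ from rfl,
    Matrix.det_transpose] at this
  exact this

/-! ### Combinatorial helpers on strictly monotone tuples -/

lemma sm_le {k n : ℕ} {r : Fin k → Fin n} (hr : StrictMono r) {a b : Fin k}
    (h : a.1 ≤ b.1) : (r a).1 ≤ (r b).1 := by
  rcases eq_or_lt_of_le h with h'|h'
  · rw [show a = b from Fin.ext h']
  · exact le_of_lt (hr (Fin.lt_def.mpr h'))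

lemma sm_lt {k n : ℕ} {r : Fin k → Fin n} (hr : StrictMono r) {a b : Fin k}
    (h : a.1 < b.1) : (r a).1 < (r b).1 := hr (Fin.lt_def.mpr h)

lemma sm_add_le {k n : ℕ} {r : Fin k → Fin n} (hr : StrictMono r) :
    ∀ (d : ℕ) (a b : Fin k), b.1 = a.1 + d → (r a).1 + d ≤ (r b).1 := by
  intro d
  induction d with
  | zero => intro a b hab; rw [show b = a from Fin.ext (by omega)]; omega
  | succ d ih =>
      intro a b hab
      have hb : a.1 + d < k := by have := b.2; omega
      have h1 := ih a ⟨a.1 + d, hb⟩ rfl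
      have h2 : (r ⟨a.1 + d, hb⟩).1 < (r b).1 := sm_lt hr (by simp; omega)
      omega

lemma pinch {k n : ℕ} {r : Fin (k+1) → Fin n} (hr : StrictMono r)
    (h : (r (Fin.last k)).1 ≤ (r 0).1 + k) : ∀ x, (r x).1 = (r 0).1 + x.1 := by
  intro x
  have h1 := sm_add_le hr x.1 0 x (by simp)
  have h2 := sm_add_le hr (k - x.1) x (Fin.last k) (by simp [Fin.last]; omega)
  have := x.2
  omega

lemma consec_of_nogap {m n : ℕ} {r : Fin (m+2) → Fin n} (hr : StrictMono r)
    (hng : ∀ j : Fin (m+1), (r j.succ).1 ≤ (r j.castSucc).1 + 1) :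
    ∀ x, (r x).1 = (r 0).1 + x.1 := by
  have key : ∀ i : ℕ, ∀ h : i < m + 2, (r ⟨i, h⟩).1 = (r 0).1 + i := by
    intro i
    induction i with
    | zero => intro h; rfl
    | succ i ih =>
        intro h
        have hi : i < m + 2 := by omega
        have hi' : i < m + 1 := by omega
        have h1 := hng ⟨i, hi'⟩
        have h2 : (r ⟨i, hi⟩).1 < (r ⟨i+1, h⟩).1 := sm_lt hr (by simp)
        have h3 : ((⟨i, hi'⟩ : Fin (m+1)).castSucc : Fin (m+2)) = ⟨i, hi⟩ := rfl
        have h4 : ((⟨i, hi'⟩ : Fin (m+1)).succ : Fin (m+2)) = ⟨i+1, h⟩ := rfl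
        rw [h3, h4] at h1
        have := ih hi
        omega
  intro x
  have := key x.1 x.2
  rwa [show (⟨x.1, x.2⟩ : Fin (m+2)) = x from rfl] at this

lemma extend_gap {n m : ℕ} {r : Fin (m+2) → Fin n} (hr : StrictMono r) {j : Fin (m+1)}
    (hgap : (r j.castSucc).1 + 1 < (r j.succ).1) :
    ∃ (ρ : Fin (m+3) → Fin n) (p : Fin (m+3)), StrictMono ρ ∧ 0 < p ∧ p < Fin.last (m+2) ∧
      ρ ∘ p.succAbove = r ∧
      ((ρ ∘ Fin.succAbove 0) (Fin.last (m+1))).1 - ((ρ ∘ Fin.succAbove 0) 0).1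
        < (r (Fin.last (m+1))).1 - (r 0).1 ∧
      ((ρ ∘ (Fin.last (m+2)).succAbove) (Fin.last (m+1))).1
          - ((ρ ∘ (Fin.last (m+2)).succAbove) 0).1
        < (r (Fin.last (m+1))).1 - (r 0).1 := by
  have hjv : j.1 < m + 1 := j.2
  have hcs : (j.castSucc).1 = j.1 := rfl
  have hsc : (j.succ).1 = j.1 + 1 := rfl
  have htlt : (r j.castSucc).1 + 1 < n := lt_trans (by omega) (r j.succ).2
  set t : Fin n := ⟨(r j.castSucc).1 + 1, htlt⟩ with ht
  set ρ : Fin (m+3) → Fin n := fun x =>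
    if hx : x.1 ≤ j.1 then r ⟨x.1, by omega⟩
    else if hx2 : x.1 = j.1 + 1 then t
    else r ⟨x.1 - 1, by have := x.2; omega⟩ with hρ
  have hv1 : ∀ (x : Fin (m+3)) (h : x.1 ≤ j.1), (ρ x).1 = (r ⟨x.1, by omega⟩).1 := by
    intro x h; rw [hρ]; simp only; rw [dif_pos h]
  have hv2 : ∀ (x : Fin (m+3)) (h : x.1 = j.1 + 1), (ρ x).1 = (r j.castSucc).1 + 1 := by
    intro x h; rw [hρ]; simp only; rw [dif_neg (by omega), dif_pos h]
  have hv3 : ∀ (x : Fin (m+3)) (h1 : ¬ x.1 ≤ j.1) (h2 : x.1 ≠ j.1 + 1),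
      (ρ x).1 = (r ⟨x.1 - 1, by have := x.2; omega⟩).1 := by
    intro x h1 h2; rw [hρ]; simp only; rw [dif_neg h1, dif_neg h2]
  have hmono : StrictMono ρ := by
    intro x y hxy
    rw [Fin.lt_def] at hxy
    rw [Fin.lt_def]
    rcases Nat.lt_trichotomy x.1 (j.1+1) with hx|hx|hx
    · have hx' : x.1 ≤ j.1 := by omega
      rw [hv1 x hx']
      rcases Nat.lt_trichotomy y.1 (j.1+1) with hy|hy|hy
      · rw [hv1 y (by omega)]; exact sm_lt hr (by simp; omega)
      · rw [hv2 y hy]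
        have h6 : ((⟨x.1, by omega⟩ : Fin (m+2)) : Fin (m+2)).1 ≤ (j.castSucc).1 := by
          simp [hcs]; omega
        have := sm_le hr h6
        omega
      · rw [hv3 y (by omega) (by omega)]; exact sm_lt hr (by simp; omega)
    · rw [hv2 x hx]
      rcases Nat.lt_trichotomy y.1 (j.1+1) with hy|hy|hy
      · omega
      · omega
      · rw [hv3 y (by omega) (by omega)]
        have h6 : (j.succ).1 ≤ ((⟨y.1 - 1, by have := y.2; omega⟩ : Fin (m+2)) : Fin (m+2)).1 := by
          simp [hsc]; omega
        have := sm_le hr h6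
        omega
    · rw [hv3 x (by omega) (by omega)]
      rcases Nat.lt_trichotomy y.1 (j.1+1) with hy|hy|hy
      · omega
      · omega
      · rw [hv3 y (by omega) (by omega)]; exact sm_lt hr (by simp; omega)
  set p : Fin (m+3) := ⟨j.1 + 1, by omega⟩ with hp
  have hpv : p.1 = j.1 + 1 := rfl
  have hcomp : ρ ∘ p.succAbove = r := by
    funext x
    apply Fin.ext
    show (ρ (p.succAbove x)).1 = (r x).1
    by_cases hc : x.1 < j.1 + 1
    · have hsav1 : (p.succAbove x).1 = x.1 := by
        rw [succAbove_val, hpv, if_pos hc]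
      rw [hv1 (p.succAbove x) (by omega)]
      congr 1
      exact Fin.ext (by simp [hsav1])
    · have hsav1 : (p.succAbove x).1 = x.1 + 1 := by
        rw [succAbove_val, hpv, if_neg hc]
      rw [hv3 (p.succAbove x) (by omega) (by omega)]
      congr 1
      exact Fin.ext (by simp [hsav1])
  have hre : ∀ (a b : Fin (m+2)), a.1 = b.1 → (r a).1 = (r b).1 := by
    intro a b h; rw [Fin.ext h]
  have hp0 : 0 < p := by
    rw [Fin.lt_def, hpv, Fin.val_zero]; omega
  have hplast : p < Fin.last (m+2) := by
    rw [Fin.lt_def, hpv, Fin.val_last]; omega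
  refine ⟨ρ, p, hmono, hp0, hplast, hcomp, ?_, ?_⟩
  · -- drop the first entry
    have e1 : ((ρ ∘ Fin.succAbove 0) (Fin.last (m+1))).1 = (r (Fin.last (m+1))).1 := by
      show (ρ (Fin.succAbove 0 (Fin.last (m+1)))).1 = _
      have hvv : (Fin.succAbove 0 (Fin.last (m+1)) : Fin (m+3)).1 = m + 2 := by
        rw [Fin.succAbove_zero]; rfl
      rw [hv3 _ (by omega) (by omega)]
      apply hre
      simp only [Fin.val_last]
      omega
    have e2 : (r 0).1 + 1 ≤ ((ρ ∘ Fin.succAbove 0) 0).1 := by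
      show (r 0).1 + 1 ≤ (ρ (Fin.succAbove 0 0)).1
      have hvv : (Fin.succAbove 0 (0 : Fin (m+2)) : Fin (m+3)).1 = 1 := by
        rw [Fin.succAbove_zero]; rfl
      by_cases hc : 1 ≤ j.1
      · rw [hv1 _ (by omega)]
        have := sm_add_le hr 1 0 ⟨(Fin.succAbove 0 (0 : Fin (m+2)) : Fin (m+3)).1, by omega⟩
          (by simp [hvv])
        omega
      · have hj0 : j.1 = 0 := by omega
        rw [hv2 _ (by omega)]
        have h7 : (r j.castSucc).1 = (r 0).1 := hre _ _ (by simp [hcs, hj0])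
        omega
    have e3 : (r 0).1 + 1 ≤ (r (Fin.last (m+1))).1 := by
      have := sm_lt hr (show (0 : Fin (m+2)).1 < (Fin.last (m+1)).1 by simp [Fin.last])
      omega
    omega
  · -- drop the last entry
    have e1 : ((ρ ∘ (Fin.last (m+2)).succAbove) 0).1 = (r 0).1 := by
      show (ρ ((Fin.last (m+2)).succAbove 0)).1 = _
      have hvv : ((Fin.last (m+2)).succAbove (0 : Fin (m+2)) : Fin (m+3)).1 = 0 := by
        rw [Fin.succAbove_last]; rfl
      rw [hv1 _ (by omega)]
      apply hre
      simp only [Fin.val_zero]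
      omega
    have e2 : ((ρ ∘ (Fin.last (m+2)).succAbove) (Fin.last (m+1))).1 + 1
        ≤ (r (Fin.last (m+1))).1 := by
      show (ρ ((Fin.last (m+2)).succAbove (Fin.last (m+1)))).1 + 1 ≤ _
      have hvv : ((Fin.last (m+2)).succAbove (Fin.last (m+1)) : Fin (m+3)).1 = m + 1 := by
        rw [Fin.succAbove_last]; rfl
      by_cases hc : j.1 = m
      · rw [hv2 _ (by omega)]
        have h5 : (r j.succ).1 ≤ (r (Fin.last (m+1))).1 :=
          sm_le hr (by simp only [hsc, Fin.val_last]; omega)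
        omega
      · rw [hv3 _ (by omega) (by omega)]
        have h5 : (r ⟨((Fin.last (m+2)).succAbove (Fin.last (m+1)) : Fin (m+3)).1 - 1,
            by have := ((Fin.last (m+2)).succAbove (Fin.last (m+1))).isLt; omega⟩).1 + 1
            ≤ (r (Fin.last (m+1))).1 := by
          have := sm_lt hr (a := ⟨((Fin.last (m+2)).succAbove (Fin.last (m+1)) : Fin (m+3)).1 - 1,
            by have := ((Fin.last (m+2)).succAbove (Fin.last (m+1))).isLt; omega⟩)
            (b := Fin.last (m+1)) (by simp only [Fin.val_last]; omega)
          omega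
        omega
    have e3 : (r 0).1 + 1 ≤ (r (Fin.last (m+1))).1 := by
      have := sm_lt hr (show (0 : Fin (m+2)).1 < (Fin.last (m+1)).1 by simp [Fin.last])
      omega
    omega

lemma allMinors {n : ℕ} (A : Matrix (Fin n) (Fin n) ℝ)
    (h0 : ∀ i j, 0 < A i j)
    (hD : ∀ k, 1 ≤ k → k ≤ n - 1 → ∀ i j, 0 < Dmat A k i j) :
    ∀ k (r c : Fin k → Fin n), StrictMono r → StrictMono c → 0 < (A.submatrix r c).det := by
  intro k
  induction k using Nat.strong_induction_on with
  | _ k IH =>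
    rcases k with _|(_|m)
    · intro r c _ _
      rw [Matrix.det_fin_zero]; norm_num
    · intro r c _ _
      rw [Matrix.det_fin_one]; exact h0 _ _
    · -- order m+2
      have hlow : ∀ (r c : Fin (m+1) → Fin n), StrictMono r → StrictMono c →
          0 < (A.submatrix r c).det := IH (m+1) (by omega)
      -- base case: contiguous minors
      have base : ∀ (r c : Fin (m+2) → Fin n), StrictMono r → StrictMono c →
          (∀ x, (r x).1 = (r 0).1 + x.1) → (∀ x, (c x).1 = (c 0).1 + x.1) →
          0 < (A.submatrix r c).det := by
        intro r c hr hc hrcon hccon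
        have hrl := hrcon (Fin.last (m+1))
        have hcl := hccon (Fin.last (m+1))
        have hrn : (r (Fin.last (m+1))).1 < n := (r _).2
        have hcn : (c (Fin.last (m+1))).1 < n := (c _).2
        simp only [Fin.val_last] at hrl hcl
        have hi' : (r 0).1 < n - (m+1) := by omega
        have hj' : (c 0).1 < n - (m+1) := by omega
        have hpos := hD (m+1) (by omega) (by omega) ⟨(r 0).1, hi'⟩ ⟨(c 0).1, hj'⟩
        unfold Dmat at hpos
        have er : r = (fun p : Fin (m+1+1) =>
            (⟨(r 0).1 + p.1, by have := p.2; omega⟩ : Fin n)) := by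
          funext x
          exact Fin.ext (by simp [hrcon x])
        have ec : c = (fun p : Fin (m+1+1) =>
            (⟨(c 0).1 + p.1, by have := p.2; omega⟩ : Fin n)) := by
          funext x
          exact Fin.ext (by simp [hccon x])
        rw [congrArg₂ A.submatrix er ec]
        exact hpos
      -- step 1: consecutive rows, arbitrary columns
      have step1 : ∀ (s : ℕ) (r c : Fin (m+2) → Fin n), StrictMono r → StrictMono c →
          (∀ x, (r x).1 = (r 0).1 + x.1) →
          (c (Fin.last (m+1))).1 ≤ (c 0).1 + (m+1) + s →
          0 < (A.submatrix r c).det := by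
        intro s
        induction s with
        | zero =>
            intro r c hr hc hrcon hcs
            exact base r c hr hc hrcon (pinch hc (by omega))
        | succ s ih =>
            intro r c hr hc hrcon hcs
            by_cases hgap : ∃ j : Fin (m+1), (c j.castSucc).1 + 1 < (c j.succ).1
            · obtain ⟨j, hj⟩ := hgap
              obtain ⟨γ, p, hγ, hp0, hpl, hpr, hs1, hs2⟩ := extend_gap hc hj
              have hc0l := sm_le hc (a := (0 : Fin (m+2))) (b := Fin.last (m+1)) (by simp)
              rw [← hpr]
              apply keyStepT A hlow r γ hr hγ p hp0 hpl
              · have hm := hγ.comp (Fin.strictMono_succAbove 0)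
                have hu := sm_le hm (a := (0 : Fin (m+2))) (b := Fin.last (m+1)) (by simp)
                exact ih r (γ ∘ Fin.succAbove 0) hr hm hrcon (by omega)
              · have hm := hγ.comp (Fin.strictMono_succAbove (Fin.last (m+2)))
                have hu := sm_le hm (a := (0 : Fin (m+2))) (b := Fin.last (m+1)) (by simp)
                exact ih r (γ ∘ (Fin.last (m+2)).succAbove) hr hm hrcon (by omega)
            · push_neg at hgap
              exact base r c hr hc hrcon (consec_of_nogap hc hgap)
      -- step 2: arbitrary rows and columns
      have step2 : ∀ (s : ℕ) (r c : Fin (m+2) → Fin n), StrictMono r → StrictMono c →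
          (r (Fin.last (m+1))).1 ≤ (r 0).1 + (m+1) + s →
          0 < (A.submatrix r c).det := by
        intro s
        induction s with
        | zero =>
            intro r c hr hc hrs
            exact step1 ((c (Fin.last (m+1))).1) r c hr hc (pinch hr (by omega)) (by omega)
        | succ s ih =>
            intro r c hr hc hrs
            by_cases hgap : ∃ j : Fin (m+1), (r j.castSucc).1 + 1 < (r j.succ).1
            · obtain ⟨j, hj⟩ := hgap
              obtain ⟨ρ, p, hρ, hp0, hpl, hpr, hs1, hs2⟩ := extend_gap hr hj
              have hr0l := sm_le hr (a := (0 : Fin (m+2))) (b := Fin.last (m+1)) (by simp)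
              rw [← hpr]
              apply keyStep A hlow ρ c hρ hc p hp0 hpl
              · have hm := hρ.comp (Fin.strictMono_succAbove 0)
                have hu := sm_le hm (a := (0 : Fin (m+2))) (b := Fin.last (m+1)) (by simp)
                exact ih (ρ ∘ Fin.succAbove 0) c hm hc (by omega)
              · have hm := hρ.comp (Fin.strictMono_succAbove (Fin.last (m+2)))
                have hu := sm_le hm (a := (0 : Fin (m+2))) (b := Fin.last (m+1)) (by simp)
                exact ih (ρ ∘ (Fin.last (m+2)).succAbove) c hm hc (by omega)
            · push_neg at hgap
              exact step1 ((c (Fin.last (m+1))).1) r c hr hc (consec_of_nogap hr hgap) (by omega)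
      intro r c hr hc
      exact step2 ((r (Fin.last (m+1))).1) r c hr hc (by omega)

end FeketeAux

/-- If all entries of `A` are positive and all entries of every Dodgson
condensation matrix `D_k(A)` (`1 ≤ k ≤ n-1`) are positive, then `A` is totally
positive. -/
theorem totallyPos_of_Dmat_entries_pos {n : ℕ} (A : Matrix (Fin n) (Fin n) ℝ)
    (h0 : ∀ i j, 0 < A i j)
    (hD : ∀ k, 1 ≤ k → k ≤ n - 1 → ∀ i j, 0 < Dmat A k i j) :
    IsTP A := by
  intro l r c hr hc
  exact FeketeAux.allMinors A h0 hD l r c hr hc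
end
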